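/- arXiv:math/0609351 — 9 statements merged into one kernel-verified Lean document; each statement's English description precedes it below -/
import Mathlib

section
/- A subset of the real line is nowhere dense with respect to the Sorgenfrey (lower limit) topology if and only if it is nowhere dense with respect to the Euclidean topology. More generally, for every natural number n, a subset of ℝⁿ is nowhere dense in the product of n copies of the Sorgenfrey line if and only if it is nowhere dense in the Euclidean product topology on ℝⁿ. -/
open Topology

/-- The Sorgenfrey (lower limit) topology on `ℝ`, generated by the half-open
intervals `[a, b)`. -/
def sorgenfreyTopology : TopologicalSpace ℝ :=
  TopologicalSpace.generateFrom {s : Set ℝ | ∃ a b : ℝ, s = Set.Ico a b}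

/-- The product of `n` copies of the Sorgenfrey line, as a topology on `Fin n → ℝ`. -/
def sorgenfreyPiTopology (n : ℕ) : TopologicalSpace (Fin n → ℝ) :=
  @Pi.topologicalSpace (Fin n) (fun _ => ℝ) (fun _ => sorgenfreyTopology)

open Set TopologicalSpace

lemma aux_nd_iff {α : Type*} [T : TopologicalSpace α] (s : Set α) :
    IsNowhereDense s ↔ ∀ U : Set α, IsOpen U → U.Nonempty →
      ∃ V : Set α, IsOpen V ∧ V.Nonempty ∧ V ⊆ U ∧ V ∩ s = ∅ := by
  constructor
  · intro h U hU hUne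
    have hns : ¬ U ⊆ closure s := by
      intro hsub
      have h2 : U ⊆ interior (closure s) := hU.subset_interior_iff.mpr hsub
      rw [h] at h2
      exact hUne.ne_empty (subset_empty_iff.mp h2)
    obtain ⟨x, hxU, hxc⟩ := not_subset.mp hns
    refine ⟨U ∩ (closure s)ᶜ, hU.inter isClosed_closure.isOpen_compl,
      ⟨x, hxU, hxc⟩, inter_subset_left, ?_⟩
    rw [eq_empty_iff_forall_notMem]
    intro y hy
    exact hy.1.2 (subset_closure hy.2)
  · intro h
    rw [IsNowhereDense]
    by_contra hne
    obtain ⟨V, hV, hVne, hVsub, hVs⟩ :=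
      h _ isOpen_interior (nonempty_iff_ne_empty.mpr hne)
    obtain ⟨y, hy⟩ := hVne
    have hyc : y ∈ closure s := interior_subset (hVsub hy)
    have h3 := mem_closure_iff.mp hyc V hV hy
    exact h3.ne_empty hVs

lemma aux_nd_transfer {α : Type*} (t e : TopologicalSpace α)
    (hle : ∀ U : Set α, e.IsOpen U → t.IsOpen U)
    (hbas : ∀ U : Set α, t.IsOpen U → U.Nonempty →
      ∃ V : Set α, e.IsOpen V ∧ V.Nonempty ∧ V ⊆ U)
    (s : Set α) : @IsNowhereDense α t s ↔ @IsNowhereDense α e s := by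
  rw [@aux_nd_iff α t, @aux_nd_iff α e]
  constructor
  · intro h U hU hUne
    obtain ⟨U', hU', hU'ne, hU'sub⟩ := hbas U (hle U hU) hUne
    obtain ⟨V, hV, hVne, hVsub, hVs⟩ := h U' (hle U' hU') hU'ne
    obtain ⟨W, hW, hWne, hWsub⟩ := hbas V hV hVne
    refine ⟨W, hW, hWne, hWsub.trans (hVsub.trans hU'sub), ?_⟩
    rw [eq_empty_iff_forall_notMem]
    intro y hy
    have : y ∈ V ∩ s := ⟨hWsub hy.1, hy.2⟩
    rw [hVs] at this
    exact this
  · intro h U hU hUne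
    obtain ⟨U', hU', hU'ne, hU'sub⟩ := hbas U hU hUne
    obtain ⟨V, hV, hVne, hVsub, hVs⟩ := h U' hU' hU'ne
    exact ⟨V, hle V hV, hVne, hVsub.trans hU'sub, hVs⟩

lemma aux_s_nhds {U : Set ℝ} (hU : sorgenfreyTopology.IsOpen U) :
    ∀ x ∈ U, ∃ b, x < b ∧ Ico x b ⊆ U := by
  have hU' : GenerateOpen {s : Set ℝ | ∃ a b : ℝ, s = Set.Ico a b} U := hU
  clear hU
  induction hU' with
  | basic u hu =>
    obtain ⟨a, b, rfl⟩ := hu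
    intro x hx
    exact ⟨b, hx.2, fun y hy => ⟨le_trans hx.1 hy.1, hy.2⟩⟩
  | univ =>
    intro x _
    exact ⟨x + 1, lt_add_one x, fun y _ => trivial⟩
  | inter u v _ _ ihu ihv =>
    intro x hx
    obtain ⟨b1, hb1, hsub1⟩ := ihu x hx.1
    obtain ⟨b2, hb2, hsub2⟩ := ihv x hx.2
    exact ⟨min b1 b2, lt_min hb1 hb2, fun y hy =>
      ⟨hsub1 ⟨hy.1, hy.2.trans_le (min_le_left _ _)⟩,
       hsub2 ⟨hy.1, hy.2.trans_le (min_le_right _ _)⟩⟩⟩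
  | sUnion S _ ih =>
    intro x hx
    obtain ⟨u, huS, hxu⟩ := hx
    obtain ⟨b, hb, hsub⟩ := ih u huS x hxu
    exact ⟨b, hb, fun y hy => ⟨u, huS, hsub hy⟩⟩

lemma aux_s_open_of {U : Set ℝ} (h : ∀ x ∈ U, ∃ b, x < b ∧ Ico x b ⊆ U) :
    sorgenfreyTopology.IsOpen U := by
  have hEq : U = ⋃₀ {V : Set ℝ | (∃ a b : ℝ, V = Ico a b) ∧ V ⊆ U} := by
    ext x
    constructor
    · intro hx
      obtain ⟨b, hb, hsub⟩ := h x hx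
      exact ⟨Ico x b, ⟨⟨x, b, rfl⟩, hsub⟩, le_refl x, hb⟩
    · rintro ⟨V, ⟨_, hsub⟩, hxV⟩
      exact hsub hxV
  rw [hEq]
  exact GenerateOpen.sUnion _ fun V hV => GenerateOpen.basic V hV.1

lemma aux_s_le (U : Set ℝ) (hU : IsOpen U) : sorgenfreyTopology.IsOpen U := by
  apply aux_s_open_of
  intro x hx
  obtain ⟨ε, hε, hball⟩ := Metric.isOpen_iff.mp hU x hx
  refine ⟨x + ε, by linarith, fun y hy => hball ?_⟩
  rw [Metric.mem_ball, Real.dist_eq, abs_lt]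
  exact ⟨by linarith [hy.1], by linarith [hy.2]⟩

lemma aux_s_bas (U : Set ℝ) (hU : sorgenfreyTopology.IsOpen U) (hne : U.Nonempty) :
    ∃ V : Set ℝ, IsOpen V ∧ V.Nonempty ∧ V ⊆ U := by
  obtain ⟨x, hx⟩ := hne
  obtain ⟨b, hb, hsub⟩ := aux_s_nhds hU x hx
  exact ⟨Ioo x b, isOpen_Ioo, ⟨(x + b) / 2, ⟨by linarith, by linarith⟩⟩,
    fun y hy => hsub ⟨hy.1.le, hy.2⟩⟩

lemma aux_spi_le (n : ℕ) (U : Set (Fin n → ℝ)) (hU : IsOpen U) :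
    (sorgenfreyPiTopology n).IsOpen U := by
  have hle : sorgenfreyTopology ≤ (inferInstance : TopologicalSpace ℝ) :=
    TopologicalSpace.le_def.mpr fun V hV => aux_s_le V hV
  have h : sorgenfreyPiTopology n ≤ (Pi.topologicalSpace : TopologicalSpace (Fin n → ℝ)) := by
    exact iInf_mono fun i => induced_mono hle
  exact TopologicalSpace.le_def.mp h U hU

lemma aux_spi_bas (n : ℕ) (U : Set (Fin n → ℝ))
    (hU : (sorgenfreyPiTopology n).IsOpen U) (hne : U.Nonempty) :
    ∃ V : Set (Fin n → ℝ), IsOpen V ∧ V.Nonempty ∧ V ⊆ U := by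
  obtain ⟨x, hx⟩ := hne
  have hU' : @IsOpen _ (@Pi.topologicalSpace (Fin n) (fun _ => ℝ)
    (fun _ => sorgenfreyTopology)) U := hU
  obtain ⟨I, u, hu, hsub⟩ :=
    (@isOpen_pi_iff (Fin n) (fun _ => ℝ) (fun _ => sorgenfreyTopology) U).mp hU' x hx
  have hb : ∀ i : Fin n, ∃ b, x i < b ∧ (i ∈ I → Ico (x i) b ⊆ u i) := by
    intro i
    by_cases hi : i ∈ I
    · obtain ⟨b, hb, hs⟩ := aux_s_nhds (hu i hi).1 (x i) (hu i hi).2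
      exact ⟨b, hb, fun _ => hs⟩
    · exact ⟨x i + 1, lt_add_one _, fun hi' => absurd hi' hi⟩
  choose b hb1 hb2 using hb
  refine ⟨Set.pi Set.univ (fun i => Ioo (x i) (b i)),
    isOpen_set_pi Set.finite_univ (fun i _ => isOpen_Ioo),
    ⟨fun i => (x i + b i) / 2, fun i _ => ⟨by linarith [hb1 i], by linarith [hb1 i]⟩⟩, ?_⟩
  intro y hy
  apply hsub
  intro i hi
  exact hb2 i hi ⟨(hy i (mem_univ i)).1.le, (hy i (mem_univ i)).2⟩

/-- A subset of the real line is nowhere dense in the Sorgenfrey topology iff it is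
nowhere dense in the Euclidean topology; more generally, for every `n`, a subset of `ℝⁿ`
is nowhere dense in the product of `n` copies of the Sorgenfrey line iff it is nowhere
dense in the Euclidean product topology. -/
theorem sorgenfrey_nowhereDense_iff :
    (∀ s : Set ℝ, @IsNowhereDense ℝ sorgenfreyTopology s ↔ IsNowhereDense s) ∧
    (∀ (n : ℕ) (s : Set (Fin n → ℝ)),
      @IsNowhereDense (Fin n → ℝ) (sorgenfreyPiTopology n) s ↔ IsNowhereDense s) := by
  constructor
  · intro s
    exact aux_nd_transfer sorgenfreyTopology _ aux_s_le aux_s_bas s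
  · intro n s
    exact aux_nd_transfer (sorgenfreyPiTopology n) _ (aux_spi_le n) (aux_spi_bas n) s
end

section
/- If σ and τ are Π-related topologies on a set X, then a subset of X is σ-nowhere dense if and only if it is τ-nowhere dense. -/
open Topology

/-- `N` is a π-network for the topology `t` on `X`: a family of nonempty subsets of `X`
such that every nonempty `t`-open set contains a member of the family. -/
def IsPiNetwork {X : Type*} (t : TopologicalSpace X) (N : Set (Set X)) : Prop :=
  (∀ s ∈ N, s.Nonempty) ∧ ∀ U : Set X, IsOpen[t] U → U.Nonempty → ∃ s ∈ N, s ⊆ U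

/-- Topologies `σ` and `τ` on a set `X` are Π-related if `τ` contains a π-network for
the topology `σ` and `σ` contains a π-network for the topology `τ`. -/
def PiRelated {X : Type*} (σ τ : TopologicalSpace X) : Prop :=
  (∃ N : Set (Set X), (∀ s ∈ N, IsOpen[τ] s) ∧ IsPiNetwork σ N) ∧
  (∃ N : Set (Set X), (∀ s ∈ N, IsOpen[σ] s) ∧ IsPiNetwork τ N)

lemma isNowhereDense_iff_aux {X : Type*} [TopologicalSpace X] (s : Set X) :
    IsNowhereDense s ↔
      ∀ U : Set X, IsOpen U → U.Nonempty → ∃ V : Set X,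
        IsOpen V ∧ V.Nonempty ∧ V ⊆ U ∧ Disjoint V s := by
  constructor
  · intro hs U hU hUne
    refine ⟨U \ closure s, hU.sdiff isClosed_closure, ?_, Set.diff_subset, ?_⟩
    · rcases Set.not_subset.mp (fun hsub => hUne.ne_empty
        (Set.subset_empty_iff.mp (hs ▸ interior_maximal hsub hU))) with ⟨x, hxU, hxc⟩
      exact ⟨x, hxU, hxc⟩
    · exact Set.disjoint_left.mpr fun x hx hxs => hx.2 (subset_closure hxs)
  · intro H
    rw [IsNowhereDense, Set.eq_empty_iff_forall_notMem]
    intro x hx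
    obtain ⟨V, hVo, ⟨y, hy⟩, hVsub, hVd⟩ :=
      H (interior (closure s)) isOpen_interior ⟨x, hx⟩
    have hyc : y ∈ closure s := interior_subset (hVsub hy)
    rcases mem_closure_iff.mp hyc V hVo hy with ⟨z, hzV, hzs⟩
    exact hVd.ne_of_mem hzV hzs rfl

/-- If `σ` and `τ` are Π-related topologies on a set `X`, then a subset of `X` is
`σ`-nowhere dense iff it is `τ`-nowhere dense. -/
theorem piRelated_isNowhereDense_iff {X : Type*} (σ τ : TopologicalSpace X)
    (h : PiRelated σ τ) (s : Set X) :
    @IsNowhereDense X σ s ↔ @IsNowhereDense X τ s := by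
  obtain ⟨⟨N₁, hN₁o, hN₁ne, hN₁⟩, ⟨N₂, hN₂o, hN₂ne, hN₂⟩⟩ := h
  rw [@isNowhereDense_iff_aux X σ, @isNowhereDense_iff_aux X τ]
  constructor
  · intro H U hU hUne
    obtain ⟨P, hPN, hPU⟩ := hN₂ U hU hUne
    obtain ⟨V, hVo, hVne, hVP, hVd⟩ := H P (hN₂o P hPN) (hN₂ne P hPN)
    obtain ⟨Q, hQN, hQV⟩ := hN₁ V hVo hVne
    exact ⟨Q, hN₁o Q hQN, hN₁ne Q hQN, hQV.trans (hVP.trans hPU),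
      hVd.mono_left hQV⟩
  · intro H U hU hUne
    obtain ⟨P, hPN, hPU⟩ := hN₁ U hU hUne
    obtain ⟨V, hVo, hVne, hVP, hVd⟩ := H P (hN₁o P hPN) (hN₁ne P hPN)
    obtain ⟨Q, hQN, hQV⟩ := hN₂ V hVo hVne
    exact ⟨Q, hN₂o Q hQN, hN₂ne Q hQN, hQV.trans (hVP.trans hPU),
      hVd.mono_left hQV⟩
end

section
/- Let γ be the cross topology on ℝ × ℝ. Then cof(nwd_γ) > 2^ℵ₀, i.e., for every family {F_α : α < 2^ℵ₀} of γ-nowhere dense subsets of ℝ × ℝ there exists a γ-nowhere dense set contained in no F_α. -/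
open Topology Set

/-- The cross topology `γ` on `ℝ × ℝ`: a set is open iff all of its vertical and
horizontal sections are open in `ℝ`. -/
def crossTopology : TopologicalSpace (ℝ × ℝ) where
  IsOpen G := (∀ x : ℝ, IsOpen {y : ℝ | (x, y) ∈ G}) ∧ (∀ y : ℝ, IsOpen {x : ℝ | (x, y) ∈ G})
  isOpen_univ := ⟨fun _ => isOpen_univ, fun _ => isOpen_univ⟩
  isOpen_inter := fun A B hA hB =>
    ⟨fun x => (hA.1 x).inter (hB.1 x), fun y => (hA.2 y).inter (hB.2 y)⟩
  isOpen_sUnion := fun S hS => by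
    constructor
    · intro x
      have h : {y : ℝ | (x, y) ∈ ⋃₀ S} = ⋃ G ∈ S, {y : ℝ | (x, y) ∈ G} := by
        ext y; simp
      rw [h]
      exact isOpen_biUnion fun G hG => (hS G hG).1 x
    · intro y
      have h : {x : ℝ | (x, y) ∈ ⋃₀ S} = ⋃ G ∈ S, {x : ℝ | (x, y) ∈ G} := by
        ext x; simp
      rw [h]
      exact isOpen_biUnion fun G hG => (hS G hG).2 y

lemma crossTopology_isOpen_iff (G : Set (ℝ × ℝ)) :
    @IsOpen _ crossTopology G ↔
      (∀ x : ℝ, IsOpen {y : ℝ | (x, y) ∈ G}) ∧ (∀ y : ℝ, IsOpen {x : ℝ | (x, y) ∈ G}) :=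
  Iff.rfl

/-- In a nonempty open subset of `ℝ` one can find a point avoiding any set of
cardinality less than the continuum. -/
lemma exists_open_notMem {O : Set ℝ} (hO : IsOpen O) (hne : O.Nonempty) {U : Set ℝ}
    (hU : Cardinal.mk U < Cardinal.continuum) : ∃ x ∈ O, x ∉ U := by
  by_contra h
  push_neg at h
  obtain ⟨x, hx⟩ := hne
  obtain ⟨ε, hε, hball⟩ := Metric.isOpen_iff.1 hO x hx
  have hIoo : Ioo (x - ε) (x + ε) ⊆ U := fun y hy =>
    h y (hball (by simpa [Real.ball_eq_Ioo] using hy))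
  have h2 : Cardinal.continuum ≤ Cardinal.mk U := by
    rw [← Cardinal.mk_Ioo_real (show x - ε < x + ε by linarith)]
    exact Cardinal.mk_le_mk_of_subset hIoo
  exact absurd h2 (not_le.2 hU)

/-- Key step: given a `γ`-nowhere dense set `F` and small sets `U, V` of reals, there is
a point outside `F` whose coordinates avoid `U` and `V`. -/
lemma key_step (F : Set (ℝ × ℝ)) (hF : @IsNowhereDense _ crossTopology F)
    (U V : Set ℝ) (hU : Cardinal.mk U < Cardinal.continuum)
    (hV : Cardinal.mk V < Cardinal.continuum) :
    ∃ p : ℝ × ℝ, p ∉ F ∧ p.1 ∉ U ∧ p.2 ∉ V := by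
  letI := crossTopology
  by_contra hcon
  push_neg at hcon
  have hsub : Uᶜ ×ˢ Vᶜ ⊆ F := by
    rintro ⟨x, y⟩ ⟨hx, hy⟩
    by_contra hxy
    exact hy (hcon (x, y) hxy hx)
  have hdense : @Dense _ crossTopology (Uᶜ ×ˢ Vᶜ) := by
    rw [dense_iff_inter_open]
    rintro G hG ⟨⟨x, y⟩, hxyG⟩
    obtain ⟨hGv, hGh⟩ := (crossTopology_isOpen_iff G).1 hG
    obtain ⟨x', hx'G, hx'U⟩ := exists_open_notMem (hGh y) ⟨x, hxyG⟩ hU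
    obtain ⟨y', hy'G, hy'V⟩ := exists_open_notMem (hGv x') ⟨y, hx'G⟩ hV
    exact ⟨(x', y'), hy'G, hx'U, hy'V⟩
  have hdF : @Dense _ crossTopology F := Dense.mono hsub hdense
  have h2 : @interior _ crossTopology (@closure _ crossTopology F) = ∅ := hF
  rw [Dense.closure_eq hdF, interior_univ] at h2
  exact (univ_nonempty : (univ : Set (ℝ × ℝ)).Nonempty).ne_empty h2

lemma subsingleton_isClosed {s : Set ℝ} (h : s.Subsingleton) : IsClosed s := by
  rcases h.eq_empty_or_singleton with rfl | ⟨a, rfl⟩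
  · exact isClosed_empty
  · exact isClosed_singleton

/-- A set all of whose vertical and horizontal sections are subsingletons is
`γ`-nowhere dense. -/
lemma nwd_of_sections {N : Set (ℝ × ℝ)}
    (hv : ∀ x : ℝ, {y : ℝ | (x, y) ∈ N}.Subsingleton)
    (hh : ∀ y : ℝ, {x : ℝ | (x, y) ∈ N}.Subsingleton) :
    @IsNowhereDense _ crossTopology N := by
  letI := crossTopology
  have hclosed : @IsClosed _ crossTopology N := by
    have hcompl : @IsOpen _ crossTopology Nᶜ := by
      rw [crossTopology_isOpen_iff]
      exact ⟨fun x => (subsingleton_isClosed (hv x)).isOpen_compl,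
        fun y => (subsingleton_isClosed (hh y)).isOpen_compl⟩
    exact isOpen_compl_iff.mp hcompl
  rw [hclosed.isNowhereDense_iff, eq_empty_iff_forall_notMem]
  rintro ⟨x, y⟩ hmem
  rw [mem_interior] at hmem
  obtain ⟨G, hGsub, hGopen, hpG⟩ := hmem
  obtain ⟨hGv, _⟩ := (crossTopology_isOpen_iff G).1 hGopen
  have hone : Cardinal.mk ({y} : Set ℝ) < Cardinal.continuum := by
    rw [Cardinal.mk_singleton]
    exact lt_of_lt_of_le Cardinal.one_lt_aleph0 Cardinal.aleph0_le_continuum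
  obtain ⟨y', hy'G, hy'⟩ := exists_open_notMem (hGv x) ⟨y, hpG⟩ hone
  exact hy' (hv x (hGsub hy'G) (hGsub hpG))

/-- Auxiliary functional for the transfinite recursion. -/
noncomputable def pickF (F' : (Cardinal.continuum.ord).ToType → Set (ℝ × ℝ))
    (hF' : ∀ b, @IsNowhereDense _ crossTopology (F' b))
    (b : (Cardinal.continuum.ord).ToType)
    (rec : ∀ b', b' < b → ℝ × ℝ) : ℝ × ℝ :=
  Classical.choose (key_step (F' b) (hF' b)
    (Set.range fun b' : Iio b => (rec b'.1 b'.2).1)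
    (Set.range fun b' : Iio b => (rec b'.1 b'.2).2)
    (lt_of_le_of_lt Cardinal.mk_range_le (Cardinal.mk_Iio_ord_toType b))
    (lt_of_le_of_lt Cardinal.mk_range_le (Cardinal.mk_Iio_ord_toType b)))

lemma pickF_spec (F' : (Cardinal.continuum.ord).ToType → Set (ℝ × ℝ))
    (hF' : ∀ b, @IsNowhereDense _ crossTopology (F' b))
    (b : (Cardinal.continuum.ord).ToType) (rec : ∀ b', b' < b → ℝ × ℝ) :
    pickF F' hF' b rec ∉ F' b ∧
      (pickF F' hF' b rec).1 ∉ (Set.range fun b' : Iio b => (rec b'.1 b'.2).1) ∧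
      (pickF F' hF' b rec).2 ∉ (Set.range fun b' : Iio b => (rec b'.1 b'.2).2) :=
  Classical.choose_spec (key_step (F' b) (hF' b)
    (Set.range fun b' : Iio b => (rec b'.1 b'.2).1)
    (Set.range fun b' : Iio b => (rec b'.1 b'.2).2)
    (lt_of_le_of_lt Cardinal.mk_range_le (Cardinal.mk_Iio_ord_toType b))
    (lt_of_le_of_lt Cardinal.mk_range_le (Cardinal.mk_Iio_ord_toType b)))

/-- The transfinite choice of points. -/
noncomputable def pick (F' : (Cardinal.continuum.ord).ToType → Set (ℝ × ℝ))
    (hF' : ∀ b, @IsNowhereDense _ crossTopology (F' b)) :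
    (Cardinal.continuum.ord).ToType → ℝ × ℝ :=
  WellFounded.fix wellFounded_lt (pickF F' hF')

lemma pick_spec (F' : (Cardinal.continuum.ord).ToType → Set (ℝ × ℝ))
    (hF' : ∀ b, @IsNowhereDense _ crossTopology (F' b))
    (b : (Cardinal.continuum.ord).ToType) :
    pick F' hF' b ∉ F' b ∧
      ∀ b', b' < b → (pick F' hF' b').1 ≠ (pick F' hF' b).1 ∧
        (pick F' hF' b').2 ≠ (pick F' hF' b).2 := by
  have heq : pick F' hF' b = pickF F' hF' b (fun b' _ => pick F' hF' b') :=
    WellFounded.fix_eq wellFounded_lt (pickF F' hF') b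
  have hspec := pickF_spec F' hF' b (fun b' _ => pick F' hF' b')
  rw [← heq] at hspec
  refine ⟨hspec.1, fun b' hb' => ⟨?_, ?_⟩⟩
  · intro hcontra
    exact hspec.2.1 ⟨⟨b', hb'⟩, hcontra⟩
  · intro hcontra
    exact hspec.2.2 ⟨⟨b', hb'⟩, hcontra⟩

/-- The cofinality of the ideal of nowhere dense subsets of `(ℝ × ℝ, γ)` exceeds
`2 ^ ℵ₀`: for every family of at most continuum many `γ`-nowhere dense sets there is a
`γ`-nowhere dense set contained in no member of the family. -/
theorem cof_nwd_cross_gt_continuum {ι : Type} (F : ι → Set (ℝ × ℝ))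
    (hι : Cardinal.mk ι ≤ 2 ^ Cardinal.aleph0)
    (hF : ∀ i, @IsNowhereDense (ℝ × ℝ) crossTopology (F i)) :
    ∃ N : Set (ℝ × ℝ), @IsNowhereDense (ℝ × ℝ) crossTopology N ∧ ∀ i, ¬ N ⊆ F i := by
  classical
  letI := crossTopology
  have hcard : Cardinal.mk ι ≤ Cardinal.mk (Cardinal.continuum.ord).ToType := by
    rw [Cardinal.mk_toType, Cardinal.card_ord]
    rwa [Cardinal.two_power_aleph0] at hι
  obtain ⟨e⟩ := Cardinal.le_def _ _ |>.1 hcard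
  set F' : (Cardinal.continuum.ord).ToType → Set (ℝ × ℝ) :=
    fun b => if h : ∃ i, e i = b then F h.choose else ∅ with hF'def
  have hF' : ∀ b, @IsNowhereDense _ crossTopology (F' b) := by
    intro b
    by_cases h : ∃ i, e i = b
    · simp only [hF'def, dif_pos h]; exact hF _
    · simp only [hF'def, dif_neg h]; exact isNowhereDense_empty
  set g := pick F' hF' with hg
  have hdiff : ∀ b₁ b₂, b₁ ≠ b₂ → (g b₁).1 ≠ (g b₂).1 ∧ (g b₁).2 ≠ (g b₂).2 := by
    intro b₁ b₂ hne
    rcases lt_or_gt_of_ne hne with h | h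
    · exact (pick_spec F' hF' b₂).2 b₁ h
    · have := (pick_spec F' hF' b₁).2 b₂ h
      exact ⟨this.1.symm, this.2.symm⟩
  refine ⟨Set.range g, ?_, ?_⟩
  · apply nwd_of_sections
    · intro x y₁ h₁ y₂ h₂
      obtain ⟨b₁, hb₁⟩ := h₁
      obtain ⟨b₂, hb₂⟩ := h₂
      by_contra hne
      have hbne : b₁ ≠ b₂ := by
        rintro rfl
        rw [hb₁] at hb₂
        exact hne (congrArg Prod.snd hb₂).symm.symm
      exact (hdiff b₁ b₂ hbne).1 (by rw [hb₁, hb₂])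
    · intro y x₁ h₁ x₂ h₂
      obtain ⟨b₁, hb₁⟩ := h₁
      obtain ⟨b₂, hb₂⟩ := h₂
      by_contra hne
      have hbne : b₁ ≠ b₂ := by
        rintro rfl
        rw [hb₁] at hb₂
        exact hne (congrArg Prod.fst hb₂).symm.symm
      exact (hdiff b₁ b₂ hbne).2 (by rw [hb₁, hb₂])
  · intro i hsub
    have h1 : g (e i) ∈ Set.range g := Set.mem_range_self _
    have h2 := (pick_spec F' hF' (e i)).1
    have h3 : F' (e i) = F i := by
      have hex : ∃ i', e i' = e i := ⟨i, rfl⟩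
      simp only [hF'def, dif_pos hex]
      exact congrArg F (e.injective hex.choose_spec)
    rw [h3] at h2
    exact h2 (hsub h1)
end

section
/- Let γ be the cross topology on ℝ × ℝ. Then cof(M_γ) > 2^ℵ₀, i.e., for every family {F_α : α < 2^ℵ₀} of γ-meager subsets of ℝ × ℝ there exists a γ-meager set contained in no F_α. -/
open Topology Set

/-! ### Auxiliary lemmas -/

lemma cross_isOpen_iff {U : Set (ℝ × ℝ)} :
    @IsOpen _ crossTopology U ↔
      (∀ x : ℝ, IsOpen {y : ℝ | (x, y) ∈ U}) ∧ (∀ y : ℝ, IsOpen {x : ℝ | (x, y) ∈ U}) :=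
  Iff.rfl

lemma isMeagre_of_isNowhereDense {X : Type*} [TopologicalSpace X] {s : Set X}
    (h : IsNowhereDense s) : IsMeagre s :=
  isMeagre_iff_countable_union_isNowhereDense.mpr
    ⟨{s}, by simpa using h, countable_singleton s, by simp⟩

lemma isMeagre_iUnion' {X : Type*} [TopologicalSpace X] {κ : Sort*} [Countable κ]
    {s : κ → Set X} (hs : ∀ i, IsMeagre (s i)) : IsMeagre (⋃ i, s i) := by
  rw [IsMeagre, compl_iUnion]
  exact (countable_iInter_mem).mpr hs

/-- Vertical sections of a `crossTopology`-closed set are closed. -/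
lemma vsection_closed {C : Set (ℝ × ℝ)} (hC : @IsClosed _ crossTopology C) (x : ℝ) :
    IsClosed {y : ℝ | (x, y) ∈ C} := by
  have h : @IsOpen _ crossTopology Cᶜ := hC.isOpen_compl
  have h2 : IsOpen {y : ℝ | (x, y) ∈ Cᶜ} := (cross_isOpen_iff.mp h).1 x
  rw [← isOpen_compl_iff]
  exact h2

/-- The key combinatorial fact: for a `crossTopology`-nowhere dense set `t`,
the set of `x` whose closure-section contains a fixed rational interval is
nowhere dense in `ℝ` (with the usual topology). -/
lemma E_isNowhereDense {t : Set (ℝ × ℝ)} (ht : @IsNowhereDense _ crossTopology t)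
    {p q : ℚ} (hpq : (p : ℝ) < (q : ℝ)) :
    IsNowhereDense {x : ℝ | Ioo (p : ℝ) (q : ℝ) ⊆ {y : ℝ | (x, y) ∈ @closure _ crossTopology t}} := by
  letI : TopologicalSpace (ℝ × ℝ) := crossTopology
  have hCcl : IsClosed (closure t) := isClosed_closure
  have hCint : interior (closure t) = ∅ := ht
  set C : Set (ℝ × ℝ) := closure t
  set E : Set ℝ := {x : ℝ | Ioo (p : ℝ) (q : ℝ) ⊆ {y : ℝ | (x, y) ∈ C}} with hEdef
  show interior (closure E) = ∅
  rw [eq_empty_iff_forall_notMem]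
  intro z hz
  have hnh : closure E ∈ 𝓝 z := mem_interior_iff_mem_nhds.mp hz
  obtain ⟨ε, hε, hball⟩ := Metric.mem_nhds_iff.mp hnh
  have key : ∀ x₀ ∈ Metric.ball z ε, ∀ y₀ ∈ Ioo (p : ℝ) (q : ℝ), (x₀, y₀) ∈ C := by
    intro x₀ hx₀ y₀ hy₀
    by_contra hmem
    have hHopen : IsOpen ({x : ℝ | (x, y₀) ∈ Cᶜ} ∩ Metric.ball z ε) :=
      ((cross_isOpen_iff.mp hCcl.isOpen_compl).2 y₀).inter Metric.isOpen_ball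
    have hx₀cl : x₀ ∈ closure E := hball hx₀
    have hne := mem_closure_iff.mp hx₀cl _ hHopen ⟨hmem, hx₀⟩
    obtain ⟨x', ⟨hx'U, _⟩, hx'E⟩ := hne
    exact hx'U (hx'E hy₀)
  have hprodopen : IsOpen (Metric.ball z ε ×ˢ Ioo (p : ℝ) (q : ℝ)) := by
    rw [show (IsOpen (Metric.ball z ε ×ˢ Ioo (p : ℝ) (q : ℝ))) ↔ _ from cross_isOpen_iff]
    constructor
    · intro x
      by_cases hx : x ∈ Metric.ball z ε
      · have h : {y : ℝ | (x, y) ∈ Metric.ball z ε ×ˢ Ioo (p : ℝ) (q : ℝ)}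
            = Ioo (p : ℝ) (q : ℝ) := by
          ext y; simp [Set.mem_prod, hx]
        rw [h]; exact isOpen_Ioo
      · have h : {y : ℝ | (x, y) ∈ Metric.ball z ε ×ˢ Ioo (p : ℝ) (q : ℝ)} = (∅ : Set ℝ) := by
          ext y; simp [Set.mem_prod, hx]
        rw [h]; exact isOpen_empty
    · intro y
      by_cases hy : y ∈ Ioo (p : ℝ) (q : ℝ)
      · have h : {x : ℝ | (x, y) ∈ Metric.ball z ε ×ˢ Ioo (p : ℝ) (q : ℝ)}
            = Metric.ball z ε := by
          ext x; simp [Set.mem_prod, hy]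
        rw [h]; exact Metric.isOpen_ball
      · have h : {x : ℝ | (x, y) ∈ Metric.ball z ε ×ˢ Ioo (p : ℝ) (q : ℝ)} = (∅ : Set ℝ) := by
          ext x; simp [Set.mem_prod, hy]
        rw [h]; exact isOpen_empty
  have hsub : Metric.ball z ε ×ˢ Ioo (p : ℝ) (q : ℝ) ⊆ interior C := by
    refine interior_maximal ?_ hprodopen
    rintro ⟨a, b⟩ ⟨ha, hb⟩
    exact key a ha b hb
  rw [hCint] at hsub
  have hmid : ((p : ℝ) + q) / 2 ∈ Ioo (p : ℝ) (q : ℝ) := ⟨by linarith, by linarith⟩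
  have hmem2 : (z, ((p : ℝ) + q) / 2) ∈ Metric.ball z ε ×ˢ Ioo (p : ℝ) (q : ℝ) :=
    ⟨Metric.mem_ball_self hε, hmid⟩
  exact hsub hmem2

/-- The complement of a meagre subset of `ℝ` has cardinality at least the continuum. -/
lemma continuum_le_mk_compl_of_isMeagre {D : Set ℝ} (hD : IsMeagre D) :
    (2 ^ Cardinal.aleph0 : Cardinal) ≤ Cardinal.mk ↥(Dᶜ) := by
  have hS : Dᶜ ∈ residual ℝ := hD
  have hsur : ∀ t : ℝ, ∃ ab : ↥(Dᶜ) × ↥(Dᶜ), (ab.1 : ℝ) - (ab.2 : ℝ) = t := by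
    intro t
    have hmap := (Homeomorph.addRight t).residual_map_eq
    have h2 : ⇑(Homeomorph.addRight t) ⁻¹' (Dᶜ) ∈ residual ℝ := by
      rw [← hmap] at hS
      exact Filter.mem_map.mp hS
    have h3 : (Dᶜ ∩ ⇑(Homeomorph.addRight t) ⁻¹' (Dᶜ)).Nonempty :=
      (dense_of_mem_residual (Filter.inter_mem hD h2)).nonempty
    obtain ⟨x, hx1, hx2⟩ := h3
    have hx2' : x + t ∈ Dᶜ := hx2
    exact ⟨⟨⟨x + t, hx2'⟩, ⟨x, hx1⟩⟩, by show x + t - x = t; ring⟩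
  have hf : Function.Surjective (fun ab : ↥(Dᶜ) × ↥(Dᶜ) => (ab.1 : ℝ) - (ab.2 : ℝ)) := by
    intro r
    obtain ⟨ab, hab⟩ := hsur r
    exact ⟨ab, hab⟩
  have h4 : Cardinal.mk ℝ ≤ Cardinal.mk (↥(Dᶜ) × ↥(Dᶜ)) := Cardinal.mk_le_of_surjective hf
  simp only [Cardinal.mk_prod, Cardinal.lift_id, Cardinal.mk_real] at h4
  rw [Cardinal.two_power_aleph0]
  rcases le_or_gt Cardinal.aleph0 (Cardinal.mk ↥(Dᶜ)) with h | h
  · rwa [Cardinal.mul_eq_self h] at h4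
  · exfalso
    have h5 : Cardinal.mk ↥(Dᶜ) * Cardinal.mk ↥(Dᶜ) < Cardinal.aleph0 :=
      Cardinal.mul_lt_aleph0 h h
    exact lt_asymm (h4.trans_lt h5) Cardinal.aleph0_lt_continuum

/-- Key extraction lemma: from any `crossTopology`-meagre set one can pick a point
avoiding it together with fewer-than-continuum many forbidden abscissas and ordinates. -/
lemma exists_avoid {F : Set (ℝ × ℝ)} (hF : @IsMeagre _ crossTopology F)
    {A B : Set ℝ} (hA : Cardinal.mk ↥A < 2 ^ Cardinal.aleph0)
    (hB : Cardinal.mk ↥B < 2 ^ Cardinal.aleph0) :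
    ∃ w : ℝ × ℝ, w ∉ F ∧ w.1 ∉ A ∧ w.2 ∉ B := by
  classical
  letI : TopologicalSpace (ℝ × ℝ) := crossTopology
  obtain ⟨S, hSnwd, hScnt, hSsub⟩ :=
    (@isMeagre_iff_countable_union_isNowhereDense _ crossTopology F).mp hF
  haveI : Countable ↥S := hScnt.to_subtype
  set D : Set ℝ :=
    ⋃ (t : ↥S) (p : ℚ) (q : ℚ),
      {x : ℝ | (p : ℝ) < (q : ℝ) ∧
        Ioo (p : ℝ) (q : ℝ) ⊆ {y : ℝ | (x, y) ∈ @closure _ crossTopology (t : Set (ℝ × ℝ))}}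
    with hDdef
  have hDm : IsMeagre D := by
    refine isMeagre_iUnion' fun t => isMeagre_iUnion' fun p => isMeagre_iUnion' fun q => ?_
    by_cases hpq : (p : ℝ) < (q : ℝ)
    · have h : {x : ℝ | (p : ℝ) < (q : ℝ) ∧
          Ioo (p : ℝ) (q : ℝ) ⊆ {y : ℝ | (x, y) ∈ @closure _ crossTopology (t : Set (ℝ × ℝ))}}
          = {x : ℝ |
            Ioo (p : ℝ) (q : ℝ) ⊆ {y : ℝ | (x, y) ∈ @closure _ crossTopology (t : Set (ℝ × ℝ))}} := by
        ext x; simp [hpq]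
      rw [h]
      exact isMeagre_of_isNowhereDense (E_isNowhereDense (hSnwd t t.2) hpq)
    · have h : {x : ℝ | (p : ℝ) < (q : ℝ) ∧
          Ioo (p : ℝ) (q : ℝ) ⊆ {y : ℝ | (x, y) ∈ @closure _ crossTopology (t : Set (ℝ × ℝ))}}
          = (∅ : Set ℝ) := by
        ext x; simp [hpq]
      rw [h]
      exact IsMeagre.empty
  have hcompl := continuum_le_mk_compl_of_isMeagre hDm
  have hxex : ¬ (Dᶜ ⊆ A) := fun hsub =>
    absurd (hcompl.trans (Cardinal.mk_le_mk_of_subset hsub)) (not_le.mpr hA)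
  obtain ⟨x, hxD, hxA⟩ := not_subset.mp hxex
  have hsectm : IsMeagre {y : ℝ | (x, y) ∈ F} := by
    have hsub2 : {y : ℝ | (x, y) ∈ F} ⊆
        ⋃ (t : ↥S), {y : ℝ | (x, y) ∈ @closure _ crossTopology (t : Set (ℝ × ℝ))} := by
      intro y hy
      obtain ⟨t, htS, hyt⟩ := hSsub hy
      exact mem_iUnion.mpr ⟨⟨t, htS⟩, subset_closure hyt⟩
    refine IsMeagre.mono hsub2 (isMeagre_iUnion' fun t => ?_)
    have hcl' : IsClosed {y : ℝ | (x, y) ∈ @closure _ crossTopology (t : Set (ℝ × ℝ))} :=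
      vsection_closed isClosed_closure x
    apply isMeagre_of_isNowhereDense
    rw [hcl'.isNowhereDense_iff, eq_empty_iff_forall_notMem]
    intro y hy
    rw [mem_interior_iff_mem_nhds, Metric.mem_nhds_iff] at hy
    obtain ⟨ε, hε, hb⟩ := hy
    obtain ⟨pq, hp1, hp2⟩ := exists_rat_btwn (show y - ε < y by linarith)
    obtain ⟨qq, hq1, hq2⟩ := exists_rat_btwn (show y < y + ε by linarith)
    apply hxD
    refine mem_iUnion.mpr ⟨t, mem_iUnion.mpr ⟨pq, mem_iUnion.mpr ⟨qq, ⟨hp2.trans hq1, ?_⟩⟩⟩⟩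
    intro y' hy'
    apply hb
    rw [Metric.mem_ball, Real.dist_eq, abs_sub_lt_iff]
    obtain ⟨h1, h2⟩ := hy'
    constructor <;> linarith
  have hcompl2 := continuum_le_mk_compl_of_isMeagre hsectm
  have hyex : ¬ ({y : ℝ | (x, y) ∈ F}ᶜ ⊆ B) := fun hsub =>
    absurd (hcompl2.trans (Cardinal.mk_le_mk_of_subset hsub)) (not_le.mpr hB)
  obtain ⟨y, hyF, hyB⟩ := not_subset.mp hyex
  exact ⟨(x, y), hyF, hxA, hyB⟩

/-- Cardinality bound used in the recursion. -/
lemma card_range_lt {c : Cardinal} (w : c.ord.ToType) (g : ∀ v : c.ord.ToType, v < w → ℝ) :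
    Cardinal.mk ↥(range fun v : Iio w => g v v.2) < c :=
  lt_of_le_of_lt Cardinal.mk_range_le (Cardinal.mk_Iio_ord_toType w)

/-- The cofinality of the ideal of meager subsets of `(ℝ × ℝ, γ)` exceeds `2 ^ ℵ₀`:
for every family of at most continuum many `γ`-meager sets there is a `γ`-meager set
contained in no member of the family. -/
theorem cof_meagre_cross_gt_continuum {ι : Type} (F : ι → Set (ℝ × ℝ))
    (hι : Cardinal.mk ι ≤ 2 ^ Cardinal.aleph0)
    (hF : ∀ i, @IsMeagre (ℝ × ℝ) crossTopology (F i)) :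
    ∃ N : Set (ℝ × ℝ), @IsMeagre (ℝ × ℝ) crossTopology N ∧ ∀ i, ¬ N ⊆ F i := by
  classical
  letI : TopologicalSpace (ℝ × ℝ) := crossTopology
  set c : Cardinal := 2 ^ Cardinal.aleph0 with hc
  obtain ⟨e⟩ : Nonempty (ι ↪ c.ord.ToType) := by
    have h1 : Cardinal.mk ι ≤ Cardinal.mk c.ord.ToType := by
      rw [Cardinal.mk_ord_toType]; exact hι
    exact (Cardinal.le_def ι c.ord.ToType).mp h1
  set F' : c.ord.ToType → Set (ℝ × ℝ) :=
    fun w => if h : ∃ i, e i = w then F h.choose else ∅ with hF'def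
  have hF' : ∀ w, @IsMeagre _ crossTopology (F' w) := by
    intro w
    by_cases h : ∃ i, e i = w
    · simp only [hF'def, dif_pos h]; exact hF _
    · simp only [hF'def, dif_neg h]; exact IsMeagre.empty
  have wf : WellFounded ((· < ·) : c.ord.ToType → c.ord.ToType → Prop) := wellFounded_lt
  set P : c.ord.ToType → ℝ × ℝ :=
    wf.fix (C := fun _ => ℝ × ℝ) (fun w ih => Classical.choose (exists_avoid (hF' w)
      (card_range_lt w (fun v hv => (ih v hv).1)) (card_range_lt w (fun v hv => (ih v hv).2))))
    with hPdef
  have hPeq : ∀ w, P w = Classical.choose (exists_avoid (hF' w)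
      (card_range_lt w (fun v (_ : v < w) => (P v).1))
      (card_range_lt w (fun v (_ : v < w) => (P v).2))) := by
    intro w
    rw [hPdef]
    exact WellFounded.fix_eq wf _ w
  have hspec : ∀ w, P w ∉ F' w ∧ (P w).1 ∉ range (fun v : Iio w => (P v).1)
      ∧ (P w).2 ∉ range (fun v : Iio w => (P v).2) := by
    intro w
    have h := Classical.choose_spec (exists_avoid (hF' w)
      (card_range_lt w (fun v (_ : v < w) => (P v).1))
      (card_range_lt w (fun v (_ : v < w) => (P v).2)))
    rw [← hPeq w] at h
    exact h
  have hinj1 : ∀ v w, (P v).1 = (P w).1 → v = w := by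
    intro v w h
    rcases lt_trichotomy v w with hvw | hvw | hvw
    · exact absurd ⟨⟨v, hvw⟩, h⟩ (hspec w).2.1
    · exact hvw
    · exact absurd ⟨⟨w, hvw⟩, h.symm⟩ (hspec v).2.1
  have hinj2 : ∀ v w, (P v).2 = (P w).2 → v = w := by
    intro v w h
    rcases lt_trichotomy v w with hvw | hvw | hvw
    · exact absurd ⟨⟨v, hvw⟩, h⟩ (hspec w).2.2
    · exact hvw
    · exact absurd ⟨⟨w, hvw⟩, h.symm⟩ (hspec v).2.2
  have hsubs_v : ∀ x : ℝ, ({y : ℝ | (x, y) ∈ range P}).Subsingleton := by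
    intro x y₁ h₁ y₂ h₂
    obtain ⟨w₁, hw₁⟩ := h₁
    obtain ⟨w₂, hw₂⟩ := h₂
    have hx1 : (P w₁).1 = x := by rw [hw₁]
    have hx2 : (P w₂).1 = x := by rw [hw₂]
    have hww : w₁ = w₂ := hinj1 w₁ w₂ (by rw [hx1, hx2])
    have : P w₁ = P w₂ := by rw [hww]
    rw [hw₁, hw₂] at this
    exact (Prod.mk.injEq _ _ _ _ ▸ this).2
  have hsubs_h : ∀ y : ℝ, ({x : ℝ | (x, y) ∈ range P}).Subsingleton := by
    intro y x₁ h₁ x₂ h₂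
    obtain ⟨w₁, hw₁⟩ := h₁
    obtain ⟨w₂, hw₂⟩ := h₂
    have hy1 : (P w₁).2 = y := by rw [hw₁]
    have hy2 : (P w₂).2 = y := by rw [hw₂]
    have hww : w₁ = w₂ := hinj2 w₁ w₂ (by rw [hy1, hy2])
    have : P w₁ = P w₂ := by rw [hww]
    rw [hw₁, hw₂] at this
    exact (Prod.mk.injEq _ _ _ _ ▸ this).1
  have hNcl : IsClosed (range P) := by
    refine isOpen_compl_iff.mp (cross_isOpen_iff.mpr ⟨?_, ?_⟩)
    · intro x
      have h : {y : ℝ | (x, y) ∈ (range P)ᶜ} = {y : ℝ | (x, y) ∈ range P}ᶜ := rfl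
      rw [h, isOpen_compl_iff]
      exact (hsubs_v x).isClosed
    · intro y
      have h : {x : ℝ | (x, y) ∈ (range P)ᶜ} = {x : ℝ | (x, y) ∈ range P}ᶜ := rfl
      rw [h, isOpen_compl_iff]
      exact (hsubs_h y).isClosed
  have hNnwd : @IsNowhereDense _ crossTopology (range P) := by
    show interior (closure (range P)) = ∅
    rw [hNcl.closure_eq, eq_empty_iff_forall_notMem]
    intro z hz
    obtain ⟨G, hGsub, hGopen, hzG⟩ := mem_interior.mp hz
    have hopen : IsOpen {y : ℝ | (z.1, y) ∈ G} := (cross_isOpen_iff.mp hGopen).1 z.1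
    have hzmem : z.2 ∈ {y : ℝ | (z.1, y) ∈ G} := by
      show (z.1, z.2) ∈ G
      rw [Prod.mk.eta]
      exact hzG
    obtain ⟨ε, hε, hb⟩ := Metric.isOpen_iff.mp hopen z.2 hzmem
    have h1 : z.2 ∈ {y : ℝ | (z.1, y) ∈ range P} := hGsub (hb (Metric.mem_ball_self hε))
    have h2 : z.2 + ε / 2 ∈ {y : ℝ | (z.1, y) ∈ range P} := by
      refine hGsub (hb ?_)
      rw [Metric.mem_ball, Real.dist_eq]
      have : |z.2 + ε / 2 - z.2| = ε / 2 := by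
        rw [show z.2 + ε / 2 - z.2 = ε / 2 by ring, abs_of_pos (by linarith)]
      rw [this]; linarith
    have := hsubs_v z.1 h1 h2
    linarith [this]
  refine ⟨range P, isMeagre_of_isNowhereDense hNnwd, ?_⟩
  intro i hsub
  have h1 := (hspec (e i)).1
  have hFeq : F' (e i) = F i := by
    have hex : ∃ j, e j = e i := ⟨i, rfl⟩
    simp only [hF'def, dif_pos hex]
    exact congrArg F (e.injective hex.choose_spec)
  exact h1 (hFeq ▸ hsub (mem_range_self (e i)))
end

section
/- The graph {(x, f(x)) : x ∈ ℝ} of any injective function f : ℝ → ℝ is nowhere dense in the cross topology γ on ℝ × ℝ. -/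
open Topology Set

/-- The graph of any injective function `f : ℝ → ℝ` is nowhere dense in the cross
topology `γ` on `ℝ × ℝ`. -/
theorem graph_injective_nowhereDense_cross (f : ℝ → ℝ) (hf : Function.Injective f) :
    @IsNowhereDense (ℝ × ℝ) crossTopology {p : ℝ × ℝ | p.2 = f p.1} := by
  letI := crossTopology
  set S : Set (ℝ × ℝ) := {p : ℝ × ℝ | p.2 = f p.1} with hS
  have hclosed : IsClosed S := by
    rw [← isOpen_compl_iff]
    show (∀ x : ℝ, IsOpen {y : ℝ | (x, y) ∈ Sᶜ}) ∧ (∀ y : ℝ, IsOpen {x : ℝ | (x, y) ∈ Sᶜ})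
    constructor
    · intro x
      have : {y : ℝ | (x, y) ∈ Sᶜ} = ({f x} : Set ℝ)ᶜ := by
        ext y; simp [hS]
      rw [this]
      exact isClosed_singleton.isOpen_compl
    · intro y
      have : {x : ℝ | (x, y) ∈ Sᶜ} = ({x : ℝ | f x = y} : Set ℝ)ᶜ := by
        ext x; simp [hS, eq_comm]
      rw [this]
      have hsub : ({x : ℝ | f x = y} : Set ℝ).Subsingleton := by
        intro a ha b hb
        exact hf (ha.trans hb.symm)
      exact (hsub.finite.isClosed).isOpen_compl
  have hint : interior S = ∅ := by
    rw [Set.eq_empty_iff_forall_notMem]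
    rintro ⟨x, y⟩ hp
    rcases mem_interior.mp hp with ⟨U, hUS, hUopen, hpU⟩
    have hsec : IsOpen {y : ℝ | (x, y) ∈ U} := hUopen.1 x
    have hsub : {y : ℝ | (x, y) ∈ U} ⊆ ({f x} : Set ℝ) := by
      intro z hz
      have := hUS hz
      simpa [hS] using this
    have : y ∈ interior ({f x} : Set ℝ) :=
      interior_maximal hsub hsec hpU
    rw [interior_singleton] at this
    exact this
  unfold IsNowhereDense
  rw [hclosed.closure_eq, hint]
end

section
/- If X is a nonempty Hausdorff topological space that is dense in itself (has no isolated points), then cof(nwd_X) ≥ ℵ₁; that is, for every countable family F₀, F₁, F₂, … of nowhere dense subsets of X there exists a nowhere dense subset of X contained in no Fₙ. -/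
open Topology Set

/-- If `X` is a nonempty Hausdorff space which is dense in itself (no point is
isolated), then `cof(nwd_X) ≥ ℵ₁`: for every countable family `F₀, F₁, …` of nowhere
dense subsets of `X` there is a nowhere dense subset of `X` contained in no `Fₙ`. -/
theorem cof_nwd_ge_aleph_one {X : Type*} [TopologicalSpace X] [T2Space X] [Nonempty X]
    (hdii : ∀ x : X, ¬ IsOpen ({x} : Set X))
    (F : ℕ → Set X) (hF : ∀ n, IsNowhereDense (F n)) :
    ∃ N : Set X, IsNowhereDense N ∧ ∀ n, ¬ N ⊆ F n := by
  classical
  -- one step of the construction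
  have step : ∀ (n : ℕ) (U : Set X), IsOpen U → U.Nonempty →
      ∃ p : X × Set X, IsOpen p.2 ∧ p.2.Nonempty ∧ p.2 ⊆ U ∧
        Disjoint p.2 (closure (F n)) ∧ p.1 ∈ U ∧ p.1 ∉ F n ∧ p.1 ∉ closure p.2 := by
    intro n U hU hne
    have hUo : IsOpen (U \ closure (F n)) := hU.sdiff isClosed_closure
    have hU'ne : (U \ closure (F n)).Nonempty := by
      by_contra h
      rw [Set.not_nonempty_iff_eq_empty, Set.diff_eq_empty] at h
      obtain ⟨z, hz⟩ := hne
      have hz' : z ∈ interior (closure (F n)) :=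
        interior_maximal h hU hz
      rw [hF n] at hz'
      exact hz'
    obtain ⟨x, hx⟩ := hU'ne
    have hy : ∃ y ∈ U \ closure (F n), y ≠ x := by
      by_contra h
      push_neg at h
      have heq : U \ closure (F n) = {x} :=
        subset_antisymm (fun y hy => h y hy) (by simp [hx])
      exact hdii x (heq ▸ hUo)
    obtain ⟨y, hy, hyx⟩ := hy
    obtain ⟨V, W, hVo, hWo, hxV, hyW, hVW⟩ := t2_separation hyx.symm
    refine ⟨(x, (U \ closure (F n)) ∩ W), hUo.inter hWo, ⟨y, hy, hyW⟩,
      fun z hz => hz.1.1, ?_, hx.1, fun hxF => hx.2 (subset_closure hxF), ?_⟩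
    · exact Set.disjoint_left.mpr fun z hz => hz.1.2
    · intro hxc
      have h1 : closure ((U \ closure (F n)) ∩ W) ⊆ closure W :=
        closure_mono inter_subset_right
      have h2 : Disjoint V (closure W) := hVW.closure_right hVo
      exact (Set.disjoint_left.mp h2 hxV) (h1 hxc)
  choose! f h1 h2 h3 h4 h5 h6 h7 using step
  -- the recursive sequences
  let Useq : ℕ → Set X := fun n => Nat.rec Set.univ (fun n U => (f n U).2) n
  let xseq : ℕ → X := fun n => (f n (Useq n)).1
  have hUs : ∀ n, Useq (n + 1) = (f n (Useq n)).2 := fun n => rfl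
  have hbase : ∀ n, IsOpen (Useq n) ∧ (Useq n).Nonempty := by
    intro n
    induction n with
    | zero => exact ⟨isOpen_univ, Set.univ_nonempty⟩
    | succ n ih =>
      rw [hUs n]
      exact ⟨h1 n _ ih.1 ih.2, h2 n _ ih.1 ih.2⟩
  have hsub : ∀ n, Useq (n + 1) ⊆ Useq n := fun n => by
    rw [hUs n]; exact h3 n _ (hbase n).1 (hbase n).2
  have hxU : ∀ n, xseq n ∈ Useq n := fun n => h5 n _ (hbase n).1 (hbase n).2
  have hxF : ∀ n, xseq n ∉ F n := fun n => h6 n _ (hbase n).1 (hbase n).2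
  have hxcl : ∀ n, xseq n ∉ closure (Useq (n + 1)) := fun n => by
    rw [hUs n]; exact h7 n _ (hbase n).1 (hbase n).2
  have hmono : ∀ n m, n ≤ m → Useq m ⊆ Useq n := by
    intro n m hnm
    induction hnm with
    | refl => exact subset_rfl
    | step h ih => exact fun _ h' => (ih (hsub _ h'))
  -- key discreteness property
  have key : ∀ k m, m ≠ k → xseq m ∉ Useq k \ closure (Useq (k + 1)) := by
    intro k m hmk hmem
    rcases lt_or_gt_of_ne hmk with h | h
    · -- m < k : xseq m ∉ closure (Useq (m+1)) ⊇ Useq k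
      exact hxcl m (subset_closure (hmono (m + 1) k h hmem.1))
    · -- m > k : xseq m ∈ Useq m ⊆ Useq (k+1)
      exact hmem.2 (subset_closure (hmono (k + 1) m h (hxU m)))
  refine ⟨Set.range xseq, ?_, fun n hsub' => hxF n (hsub' ⟨n, rfl⟩)⟩
  -- nowhere density
  show interior (closure (Set.range xseq)) = ∅
  by_contra hne
  rw [← Set.not_nonempty_iff_eq_empty, not_not] at hne
  obtain ⟨p, hp⟩ := hne
  set W := interior (closure (Set.range xseq)) with hWdef
  have hWo : IsOpen W := isOpen_interior
  have hWsub : W ⊆ closure (Set.range xseq) := interior_subset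
  obtain ⟨q, hqW, k, hk⟩ := mem_closure_iff.mp (hWsub hp) W hWo hp
  subst hk
  set O := Useq k \ closure (Useq (k + 1)) with hOdef
  have hOo : IsOpen O := (hbase k).1.sdiff isClosed_closure
  have hxkO : xseq k ∈ O := ⟨hxU k, hxcl k⟩
  set G := (W ∩ O) \ {xseq k} with hGdef
  have hGo : IsOpen G := (hWo.inter hOo).sdiff isClosed_singleton
  have hGempty : G = ∅ := by
    rw [← Set.not_nonempty_iff_eq_empty]
    rintro ⟨r, hr⟩
    obtain ⟨s, hsG, m, hm⟩ := mem_closure_iff.mp (hWsub hr.1.1) G hGo hr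
    by_cases hmk : m = k
    · subst hmk; exact hsG.2 (hm ▸ rfl)
    · exact key k m hmk (hm ▸ hsG.1.2)
  have hWOeq : W ∩ O = {xseq k} := by
    apply subset_antisymm
    · intro z hz
      by_contra hz'
      have : z ∈ G := ⟨hz, hz'⟩
      rw [hGempty] at this
      exact this
    · rintro z rfl
      exact ⟨hqW, hxkO⟩
  exact hdii (xseq k) (hWOeq ▸ hWo.inter hOo)
end

section
/- Let X be a dense in itself metric space and let Q be a dense subset of X. Then for each nowhere dense subset F of X there exists a set G ⊆ Q that is nowhere dense in the subspace Q and satisfies F ⊆ cl_X G, where cl_X G is the closure of G in X. -/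
open Topology Set Metric

section helpers
variable {X : Type*} [MetricSpace X]

lemma sep_isClosed' {S : Set X} {ε : ℝ} (hε : 0 < ε)
    (hsep : ∀ a ∈ S, ∀ b ∈ S, a ≠ b → ε ≤ dist a b) : IsClosed S := by
  rw [← closure_subset_iff_isClosed]
  intro z hz
  by_contra hzS
  obtain ⟨s₁, hs₁, hd₁⟩ := Metric.mem_closure_iff.1 hz (ε/2) (by linarith)
  have hne : z ≠ s₁ := fun h => hzS (h ▸ hs₁)
  obtain ⟨s₂, hs₂, hd₂⟩ := Metric.mem_closure_iff.1 hz (min (ε/2) (dist z s₁))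
    (lt_min (by linarith) (dist_pos.2 hne))
  have h21 : s₂ ≠ s₁ := by
    intro h; subst h
    exact absurd (lt_min_iff.1 hd₂).2 (lt_irrefl _)
  have htri : dist s₂ s₁ ≤ dist s₂ z + dist z s₁ := dist_triangle _ _ _
  have h1 : dist z s₂ < ε/2 := (lt_min_iff.1 hd₂).1
  rw [dist_comm] at h1
  linarith [hsep s₂ hs₂ s₁ hs₁ h21]

lemma sep_interior_empty' (hdii : ∀ x : X, ¬ IsOpen ({x} : Set X)) {S : Set X} {ε : ℝ}
    (hε : 0 < ε) (hsep : ∀ a ∈ S, ∀ b ∈ S, a ≠ b → ε ≤ dist a b) : interior S = ∅ := by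
  rw [eq_empty_iff_forall_notMem]
  intro x hx
  obtain ⟨δ, hδ, hball⟩ := Metric.mem_nhds_iff.1 (mem_interior_iff_mem_nhds.1 hx)
  have hxS : x ∈ S := interior_subset hx
  have hex : ∃ y ∈ ball x (min δ ε), y ≠ x := by
    by_contra h
    push_neg at h
    apply hdii x
    have heq : ball x (min δ ε) = {x} := by
      apply Subset.antisymm
      · intro y hy; exact h y hy
      · intro y hy; simp only [mem_singleton_iff] at hy; subst hy
        exact mem_ball_self (lt_min hδ hε)
    rw [← heq]; exact isOpen_ball
  obtain ⟨y, hy, hyx⟩ := hex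
  have hyS : y ∈ S := hball (ball_subset_ball (min_le_left _ _) hy)
  have hlt : dist y x < ε := lt_of_lt_of_le (mem_ball.1 hy) (min_le_right _ _)
  linarith [hsep y hyS x hxS hyx]

lemma exists_net' (Q F : Set X) (hQ : Dense Q) {ε : ℝ} (hε : 0 < ε) :
    ∃ S : Set X, S ⊆ Q ∧ (∀ q ∈ S, ∃ x ∈ F, dist q x < ε) ∧
      (∀ a ∈ S, ∀ b ∈ S, a ≠ b → ε ≤ dist a b) ∧ ∀ x ∈ F, ∃ s ∈ S, dist s x < 2*ε := by
  set Pn : Set (Set X) := {S | S ⊆ Q ∧ (∀ q ∈ S, ∃ x ∈ F, dist q x < ε) ∧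
      ∀ a ∈ S, ∀ b ∈ S, a ≠ b → ε ≤ dist a b} with hPn
  obtain ⟨m, hm⟩ := zorn_subset Pn (by
    intro c hc hchain
    refine ⟨⋃₀ c, ⟨?_, ?_, ?_⟩, fun s hs => subset_sUnion_of_mem hs⟩
    · intro q hq; obtain ⟨s, hs, hqs⟩ := hq; exact (hc hs).1 hqs
    · intro q hq; obtain ⟨s, hs, hqs⟩ := hq; exact (hc hs).2.1 q hqs
    · intro a ha b hb hab
      obtain ⟨s, hs, has⟩ := ha
      obtain ⟨t, ht, hbt⟩ := hb
      rcases hchain.total hs ht with h | h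
      · exact (hc ht).2.2 a (h has) b hbt hab
      · exact (hc hs).2.2 a has b (h hbt) hab)
  refine ⟨m, hm.1.1, hm.1.2.1, hm.1.2.2, ?_⟩
  intro x hx
  by_contra h
  push_neg at h
  obtain ⟨q, hqQ, hqb⟩ := hQ.exists_mem_open isOpen_ball ⟨x, mem_ball_self (by linarith)⟩
  have hqx : dist q x < ε := mem_ball.1 hqb
  have hins : insert q m ∈ Pn := by
    refine ⟨insert_subset hqQ hm.1.1, ?_, ?_⟩
    · intro a ha
      rcases ha with rfl | ha
      · exact ⟨x, hx, hqx⟩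
      · exact hm.1.2.1 a ha
    · intro a ha b hb hab
      have key : ∀ s ∈ m, ε ≤ dist q s := by
        intro s hs
        have h2 : 2*ε ≤ dist s x := h s hs
        have := dist_triangle s q x
        rw [dist_comm q s]
        linarith
      rcases ha with rfl | ha
      · rcases hb with rfl | hb
        · exact absurd rfl hab
        · exact key b hb
      · rcases hb with rfl | hb
        · rw [dist_comm]; exact key a ha
        · exact hm.1.2.2 a ha b hb hab
  have hqm : q ∈ m := hm.2 hins (subset_insert q m) (mem_insert q m)
  have := h q hqm
  linarith

end helpers

lemma fin_union_closed_nwd {X : Type*} [TopologicalSpace X] {A B : Set X}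
    (hA : IsClosed A) (hiA : interior A = ∅) (hiB : interior B = ∅) :
    interior (A ∪ B) = ∅ := by
  rw [eq_empty_iff_forall_notMem]
  intro x hx
  have hU : IsOpen (interior (A ∪ B)) := isOpen_interior
  have hsub : interior (A ∪ B) \ A ⊆ interior B := by
    apply interior_maximal
    · intro y hy
      rcases interior_subset hy.1 with h | h
      · exact absurd h hy.2
      · exact h
    · exact hU.sdiff hA
  have hemp : interior (A ∪ B) \ A = ∅ := by
    rw [← subset_empty_iff, ← hiB]; exact hsub
  have hsubA : interior (A ∪ B) ⊆ A := by
    intro y hy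
    by_contra h
    exact absurd (mem_diff_of_mem hy h) (by rw [hemp]; exact notMem_empty y)
  have hxA : x ∈ interior A := interior_maximal hsubA hU hx
  rw [hiA] at hxA; exact hxA

lemma biUnion_range_closed_nwd {X : Type*} [TopologicalSpace X] (S : ℕ → Set X)
    (hc : ∀ n, IsClosed (S n)) (hi : ∀ n, interior (S n) = ∅) (N : ℕ) :
    IsClosed (⋃ n ∈ Finset.range N, S n) ∧ interior (⋃ n ∈ Finset.range N, S n) = ∅ := by
  induction N with
  | zero => simp
  | succ N ih =>
    have heq : (⋃ n ∈ Finset.range (N+1), S n) = (⋃ n ∈ Finset.range N, S n) ∪ S N := by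
      rw [Finset.range_add_one]
      simp [Set.biUnion_insert, Set.union_comm]
    rw [heq]
    exact ⟨ih.1.union (hc N), fin_union_closed_nwd ih.1 ih.2 (hi N)⟩

/-- If `X` is a dense in itself metric space and `Q` is a dense subset of `X`, then for
every nowhere dense subset `F` of `X` there is a set `G ⊆ Q`, nowhere dense in the
subspace `Q`, whose closure in `X` contains `F`. -/
theorem nwd_subset_closure_of_dense {X : Type*} [MetricSpace X]
    (hdii : ∀ x : X, ¬ IsOpen ({x} : Set X))
    (Q : Set X) (hQ : Dense Q)
    (F : Set X) (hF : IsNowhereDense F) :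
    ∃ G : Set Q, IsNowhereDense G ∧ F ⊆ closure (Subtype.val '' G) := by
  have heps : ∀ n : ℕ, (0:ℝ) < (1/2)^n := fun n => pow_pos (by norm_num) n
  choose S hSQ hSnear hSsep hSnet using fun n : ℕ => exists_net' Q F hQ (heps n)
  set G' : Set X := ⋃ n, S n with hG'
  have hG'Q : G' ⊆ Q := iUnion_subset hSQ
  -- F is contained in the closure of G'
  have hFcl : F ⊆ closure G' := by
    intro x hx
    rw [Metric.mem_closure_iff]
    intro θ hθ
    obtain ⟨n, hn⟩ := exists_pow_lt_of_lt_one (show (0:ℝ) < θ/2 by linarith)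
      (show (1:ℝ)/2 < 1 by norm_num)
    obtain ⟨s, hs, hds⟩ := hSnet n x hx
    refine ⟨s, mem_iUnion.2 ⟨n, hs⟩, ?_⟩
    rw [dist_comm]
    linarith
  -- the closure of G' has empty interior in X
  have hG'nwd : interior (closure G') = ∅ := by
    by_contra h
    obtain ⟨y, hy⟩ := nonempty_iff_ne_empty.2 h
    obtain ⟨r, hr, hball⟩ := Metric.mem_nhds_iff.1 (mem_interior_iff_mem_nhds.1 hy)
    have hballcl : ball y r ⊆ closure G' := hball
    -- find a ball inside avoiding closure F
    have : ¬ ball y r ⊆ closure F := by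
      intro hsub
      have : y ∈ interior (closure F) :=
        mem_interior.2 ⟨ball y r, hsub, isOpen_ball, mem_ball_self hr⟩
      rw [hF] at this; exact this
    obtain ⟨y', hy'b, hy'F⟩ := not_subset.1 this
    obtain ⟨r₀, hr₀, hballF⟩ := Metric.mem_nhds_iff.1
      ((isClosed_closure (s := F)).isOpen_compl.mem_nhds hy'F)
    set r' : ℝ := min r₀ (r - dist y' y) with hr'def
    have hr' : 0 < r' := lt_min hr₀ (by have := mem_ball.1 hy'b; linarith)
    have hsubyr : ball y' r' ⊆ ball y r := by
      apply ball_subset_ball'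
      have : r' ≤ r - dist y' y := min_le_right _ _
      linarith
    have hFfar : ∀ x ∈ F, r' ≤ dist y' x := by
      intro x hx
      by_contra hlt
      push_neg at hlt
      have : x ∈ ball y' r₀ := mem_ball'.2 (lt_of_lt_of_le hlt (min_le_left _ _))
      exact (hballF this) (subset_closure hx)
    obtain ⟨N, hN⟩ := exists_pow_lt_of_lt_one (show (0:ℝ) < r'/2 by linarith)
      (show (1:ℝ)/2 < 1 by norm_num)
    set K : Set X := ⋃ n ∈ Finset.range N, S n with hK
    have hKprop := biUnion_range_closed_nwd S
      (fun n => sep_isClosed' (heps n) (hSsep n))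
      (fun n => sep_interior_empty' hdii (heps n) (hSsep n)) N
    -- points of G' close to y' come from S n with n < N
    have hGK : G' ∩ ball y' (r'/2) ⊆ K := by
      rintro g ⟨hgG, hgb⟩
      obtain ⟨n, hgn⟩ := mem_iUnion.1 hgG
      obtain ⟨x, hxF, hgx⟩ := hSnear n g hgn
      have h1 : r' ≤ dist y' x := hFfar x hxF
      have h2 : dist y' g < r'/2 := mem_ball'.1 hgb
      have h3 : dist y' x ≤ dist y' g + dist g x := dist_triangle _ _ _
      have h4 : (1/2:ℝ)^N < (1/2)^n := by linarith
      have h5 : n < N :=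
        (pow_lt_pow_iff_right_of_lt_one₀ (by norm_num) (by norm_num)).1 h4
      exact mem_biUnion (Finset.mem_range.2 h5) hgn
    -- the small ball is inside K
    have hbK : ball y' (r'/4) ⊆ K := by
      intro z hz
      have hzcl : z ∈ closure G' := hballcl (hsubyr (ball_subset_ball (by linarith) hz))
      have hzK : z ∈ closure (G' ∩ ball y' (r'/2)) := by
        rw [Metric.mem_closure_iff]
        intro θ hθ
        obtain ⟨g, hg, hdg⟩ := Metric.mem_closure_iff.1 hzcl (min θ (r'/4))
          (lt_min hθ (by linarith))
        refine ⟨g, ⟨hg, ?_⟩, lt_of_lt_of_le hdg (min_le_left _ _)⟩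
        have hzy' : dist z y' < r'/4 := mem_ball.1 hz
        have : dist g y' ≤ dist g z + dist z y' := dist_triangle _ _ _
        have : dist z g < r'/4 := lt_of_lt_of_le hdg (min_le_right _ _)
        rw [dist_comm z g] at this
        exact mem_ball.2 (by linarith [dist_triangle g z y', mem_ball.1 hz])
      have := closure_mono hGK hzK
      rwa [hKprop.1.closure_eq] at this
    have : y' ∈ interior K :=
      mem_interior.2 ⟨ball y' (r'/4), hbK, isOpen_ball, mem_ball_self (by linarith)⟩
    rw [hKprop.2] at this
    exact this
  -- assemble
  refine ⟨Subtype.val ⁻¹' G', ?_, ?_⟩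
  · -- nowhere dense in the subspace Q
    have himg : Subtype.val '' (Subtype.val ⁻¹' G' : Set Q) = G' := by
      rw [Subtype.image_preimage_coe]
      exact inter_eq_self_of_subset_right hG'Q
    rw [IsNowhereDense,
      IsEmbedding.subtypeVal.closure_eq_preimage_closure_image, himg]
    rw [eq_empty_iff_forall_notMem]
    intro q hq
    obtain ⟨t, ht, hts⟩ := (mem_nhds_subtype Q q _).1 (mem_interior_iff_mem_nhds.1 hq)
    obtain ⟨U, hUt, hUopen, hqU⟩ := _root_.mem_nhds_iff.1 ht
    have hUQ : U ∩ Q ⊆ closure G' := by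
      rintro u ⟨huU, huQ⟩
      exact hts (show (⟨u, huQ⟩ : Q) ∈ Subtype.val ⁻¹' t from hUt huU)
    have hUcl : U ⊆ closure G' := by
      intro u hu
      have : u ∈ closure (U ∩ Q) := by
        rw [_root_.mem_closure_iff]
        intro V hV hVu
        obtain ⟨w, hwQ, hwV⟩ := hQ.exists_mem_open (hV.inter hUopen) ⟨u, hVu, hu⟩
        exact ⟨w, hwV.1, hwV.2, hwQ⟩
      have h2 := closure_mono hUQ this
      rwa [closure_closure] at h2
    have : (q : X) ∈ interior (closure G') :=
      mem_interior.2 ⟨U, hUcl, hUopen, hqU⟩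
    rw [hG'nwd] at this
    exact this
  · intro x hx
    have himg : Subtype.val '' (Subtype.val ⁻¹' G' : Set Q) = G' := by
      rw [Subtype.image_preimage_coe]
      exact inter_eq_self_of_subset_right hG'Q
    rw [himg]
    exact hFcl hx
end

section
/- Let X be a dense in itself metric space and let Q be a dense subset of X. Then cof(nwd_Q) = cof(nwd_X), where nwd_Q is the family of nowhere dense subsets of the subspace Q and nwd_X is the family of nowhere dense subsets of X. -/
open Topology Set

universe u

/-- The cofinality of the ideal of nowhere dense subsets of `Z`: the least cardinality
of a family of nowhere dense sets such that every nowhere dense subset of `Z` is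
contained in a member of the family. -/
noncomputable def cofNwd (Z : Type u) [TopologicalSpace Z] : Cardinal.{u} :=
  sInf {c : Cardinal.{u} | ∃ W : Set (Set Z), Cardinal.mk W = c ∧
    (∀ s ∈ W, IsNowhereDense s) ∧
    ∀ F : Set Z, IsNowhereDense F → ∃ s ∈ W, F ⊆ s}

section Aux

open Metric

/-- Subsets of nowhere dense sets are nowhere dense. -/
lemma aux_nwd_mono {α : Type*} [TopologicalSpace α] {s t : Set α}
    (h : IsNowhereDense t) (hst : s ⊆ t) : IsNowhereDense s := by
  have h2 := interior_mono (closure_mono hst)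
  rw [h, subset_empty_iff] at h2
  exact h2

/-- Union of two closed nowhere dense sets is nowhere dense. -/
lemma aux_nwd_union {α : Type*} [TopologicalSpace α] {s t : Set α}
    (hs : IsClosed s) (ht : IsClosed t) (hs' : IsNowhereDense s) (ht' : IsNowhereDense t) :
    IsNowhereDense (s ∪ t) := by
  rw [(hs.union ht).isNowhereDense_iff, eq_empty_iff_forall_notMem]
  intro x hx
  have h1 : interior (s ∪ t) \ s ⊆ interior t :=
    interior_maximal (fun y hy => (interior_subset hy.1).resolve_left hy.2)
      (isOpen_interior.sdiff hs)
  rw [ht.isNowhereDense_iff.mp ht', subset_empty_iff, diff_eq_empty] at h1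
  have h2 := interior_maximal h1 isOpen_interior
  rw [hs.isNowhereDense_iff.mp hs', subset_empty_iff] at h2
  exact absurd hx (by rw [h2]; exact notMem_empty x)

/-- Finite unions (over `Finset.range N`) of closed nowhere dense sets are nowhere dense. -/
lemma aux_nwd_biUnion {α : Type*} [TopologicalSpace α] {E : ℕ → Set α}
    (hcl : ∀ n, IsClosed (E n)) (hnwd : ∀ n, IsNowhereDense (E n)) (N : ℕ) :
    IsNowhereDense (⋃ n ∈ Finset.range N, E n) := by
  induction N with
  | zero => simp
  | succ N ih =>
      rw [Finset.range_add_one]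
      have : (⋃ n ∈ insert N (Finset.range N), E n) =
          (⋃ n ∈ Finset.range N, E n) ∪ E N := by
        simp [Set.biUnion_insert, Set.union_comm]
      rw [this]
      exact aux_nwd_union (isClosed_biUnion_finset fun i _ => hcl i) (hcl N) ih (hnwd N)

variable {X : Type u} [MetricSpace X]

/-- Existence of maximal `ε`-separated subsets which are also `ε`-nets. -/
lemma aux_exists_net (A : Set X) {ε : ℝ} (hε : 0 < ε) :
    ∃ E ⊆ A, E.Pairwise (fun a b => ε ≤ dist a b) ∧ ∀ q ∈ A, ∃ e ∈ E, dist q e < ε := by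
  obtain ⟨m, -, hm⟩ := zorn_subset_nonempty
      {E : Set X | E ⊆ A ∧ E.Pairwise (fun a b => ε ≤ dist a b)}
      (fun c hcS hc _ => by
        refine ⟨⋃₀ c, ⟨sUnion_subset fun s hs => (hcS hs).1, ?_⟩,
          fun s hs => subset_sUnion_of_mem hs⟩
        rintro a ⟨s, hs, has⟩ b ⟨t, ht, hbt⟩ hab
        rcases hc.total hs ht with h | h
        · exact (hcS ht).2 (h has) hbt hab
        · exact (hcS hs).2 has (h hbt) hab)
      ∅ ⟨empty_subset _, pairwise_empty _⟩
  refine ⟨m, hm.prop.1, hm.prop.2, fun q hq => ?_⟩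
  by_cases hqm : q ∈ m
  · exact ⟨q, hqm, by simpa using hε⟩
  by_contra h
  push_neg at h
  have hmem : insert q m ∈ {E : Set X | E ⊆ A ∧ E.Pairwise (fun a b => ε ≤ dist a b)} := by
    refine ⟨insert_subset hq hm.prop.1, Set.pairwise_insert.mpr ⟨hm.prop.2, ?_⟩⟩
    intro b hb _
    exact ⟨h b hb, by rw [dist_comm]; exact h b hb⟩
  exact hqm (hm.2 hmem (subset_insert q m) (mem_insert q m))

/-- `ε`-separated sets are closed. -/
lemma aux_sep_closed {E : Set X} {ε : ℝ} (hε : 0 < ε)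
    (hsep : E.Pairwise (fun a b => ε ≤ dist a b)) : IsClosed E := by
  refine isClosed_of_closure_subset fun z hz => ?_
  by_contra hzE
  obtain ⟨e, heE, hze⟩ := Metric.mem_closure_iff.mp hz (ε / 2) (by linarith)
  have hzne : z ≠ e := fun h => hzE (h ▸ heE)
  have hpos : 0 < dist z e := dist_pos.mpr hzne
  obtain ⟨e', he'E, hze'⟩ := Metric.mem_closure_iff.mp hz (min (dist z e) (ε / 2))
    (lt_min hpos (by linarith))
  have hne : e' ≠ e := fun h => by
    rw [h] at hze'
    exact absurd (min_le_left (dist z e) (ε / 2)) (not_le.mpr hze')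
  have hsep' := hsep he'E heE hne
  have h4 := dist_triangle e' z e
  have h5 : dist e' z < ε / 2 := by
    rw [dist_comm]
    exact hze'.trans_le (min_le_right _ _)
  linarith

/-- `ε`-separated sets are nowhere dense when the space is dense in itself. -/
lemma aux_sep_nwd (hdii : ∀ x : X, ¬ IsOpen ({x} : Set X)) {E : Set X} {ε : ℝ} (hε : 0 < ε)
    (hsep : E.Pairwise (fun a b => ε ≤ dist a b)) : IsNowhereDense E := by
  rw [(aux_sep_closed hε hsep).isNowhereDense_iff, eq_empty_iff_forall_notMem]
  intro x hx
  obtain ⟨ρ, hρ, hball⟩ := Metric.isOpen_iff.mp isOpen_interior x hx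
  have hxE : x ∈ E := interior_subset hx
  have hb : Metric.ball x (min ρ ε) = {x} := by
    apply Subset.antisymm
    · intro y hy
      have hyE : y ∈ E := interior_subset (hball (Metric.ball_subset_ball (min_le_left _ _) hy))
      rw [mem_singleton_iff]
      by_contra hyx
      have h1 := hsep hyE hxE hyx
      have h2 : dist y x < ε := lt_of_lt_of_le (Metric.mem_ball.mp hy) (min_le_right _ _)
      linarith
    · intro y hy
      rw [mem_singleton_iff] at hy
      subst hy
      exact Metric.mem_ball_self (lt_min hρ hε)
  exact hdii x (hb ▸ Metric.isOpen_ball)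

/-- A nowhere dense subset of `X` intersected with a dense set, viewed in the subspace,
is nowhere dense. -/
lemma aux_nwd_preimage {Q : Set X} (hQ : Dense Q) {t : Set X} (ht : IsNowhereDense t) :
    IsNowhereDense ((Subtype.val ⁻¹' t : Set Q)) := by
  rw [IsNowhereDense, eq_empty_iff_forall_notMem]
  intro x hx
  obtain ⟨U, hUsub, hUopen, hxU⟩ := mem_interior.mp hx
  obtain ⟨V, hVopen, hUV⟩ := isOpen_induced_iff.mp hUopen
  have key : V ∩ Q ⊆ closure t := by
    rintro y ⟨hyV, hyQ⟩
    have h1 : (⟨y, hyQ⟩ : Q) ∈ closure (Subtype.val ⁻¹' t : Set Q) :=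
      hUsub (by rw [← hUV]; exact hyV)
    rw [closure_subtype] at h1
    refine closure_mono ?_ h1
    rw [Subtype.image_preimage_coe]
    exact inter_subset_right
  have hV : V ⊆ closure t := fun v hv =>
    closure_minimal key isClosed_closure (hQ.open_subset_closure_inter hVopen hv)
  have h2 : (x : X) ∈ interior (closure t) :=
    mem_interior.mpr ⟨V, hV, hVopen, by rw [← hUV] at hxU; exact hxU⟩
  rw [ht] at h2
  exact h2

/-- The image in `X` of a nowhere dense subset of a dense subspace `Q` is nowhere dense. -/
lemma aux_nwd_image {Q : Set X} (hQ : Dense Q) {s : Set Q} (hs : IsNowhereDense s) :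
    IsNowhereDense ((Subtype.val '' s : Set X)) := by
  rw [IsNowhereDense, eq_empty_iff_forall_notMem]
  intro x hx
  obtain ⟨q, hqV, hqQ⟩ := hQ.inter_open_nonempty _ isOpen_interior ⟨x, hx⟩
  have h1 : (⟨q, hqQ⟩ : Q) ∈ interior (closure s) := by
    rw [mem_interior]
    refine ⟨Subtype.val ⁻¹' (interior (closure (Subtype.val '' s : Set X))), ?_,
      isOpen_interior.preimage continuous_subtype_val, hqV⟩
    intro y hy
    rw [closure_subtype]
    exact interior_subset hy
  rw [hs] at h1
  exact h1

/-- Key lemma: every nowhere dense subset of a dense-in-itself metric space is contained in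
the closure of a nowhere dense set of points of a given dense set `Q`. -/
lemma aux_exists_nwd_closure (hdii : ∀ x : X, ¬ IsOpen ({x} : Set X))
    {Q : Set X} (hQ : Dense Q) {F : Set X} (hF : IsNowhereDense F) :
    ∃ E : Set X, E ⊆ Q ∧ IsNowhereDense (closure E) ∧ F ⊆ closure E := by
  classical
  set D := closure F with hD
  have hDclosed : IsClosed D := isClosed_closure
  have hDnwd : IsNowhereDense D := hF.closure
  have hDint : interior D = ∅ := hDclosed.isNowhereDense_iff.mp hDnwd
  rcases D.eq_empty_or_nonempty with hDe | hDne
  · refine ⟨∅, empty_subset _, by simp [IsNowhereDense], ?_⟩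
    rw [closure_empty]
    exact fun x hx => by rw [← hDe]; exact subset_closure hx
  have h2 : ∀ n : ℕ, (0 : ℝ) < (1 / 2) ^ n := fun n => by positivity
  set A : ℕ → Set X := fun n =>
    {q | q ∈ Q ∧ 0 < infDist q D ∧ infDist q D ≤ (1 / 2) ^ n} with hA
  choose E hEA hEsep hEcov using fun n => aux_exists_net (A n) (h2 n)
  set Etot := ⋃ n, E n with hEtot
  have hEQ : Etot ⊆ Q := iUnion_subset fun n => (hEA n).trans fun q hq => hq.1
  have hEn_closed : ∀ n, IsClosed (E n) := fun n => aux_sep_closed (h2 n) (hEsep n)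
  have hEn_nwd : ∀ n, IsNowhereDense (E n) := fun n => aux_sep_nwd hdii (h2 n) (hEsep n)
  have hmemA : ∀ n, ∀ e ∈ E n, 0 < infDist e D ∧ infDist e D ≤ (1 / 2) ^ n :=
    fun n e he => ⟨((hEA n) he).2.1, ((hEA n) he).2.2⟩
  -- points of `Etot` in a region of `infDist > r/2` lie in finitely many `E n`
  have hfinpart : ∀ (N : ℕ) (r : ℝ), (1 / 2 : ℝ) ^ N < r / 2 →
      ∀ z ∈ Etot, r / 2 < infDist z D → z ∈ ⋃ n ∈ Finset.range N, E n := by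
    intro N r hN z hz hdistz
    obtain ⟨n, hn⟩ := mem_iUnion.mp hz
    refine mem_biUnion (Finset.mem_range.mpr ?_) hn
    by_contra h
    push_neg at h
    have h1 : infDist z D ≤ (1 / 2) ^ n := (hmemA n z hn).2
    have h2' : (1 / 2 : ℝ) ^ n ≤ (1 / 2) ^ N :=
      pow_le_pow_of_le_one (by norm_num) (by norm_num) h
    linarith
  -- closure Etot ⊆ D ∪ Etot
  have hclosure : closure Etot ⊆ D ∪ Etot := by
    intro z hz
    by_cases hzD : z ∈ D
    · exact Or.inl hzD
    right
    have hr : 0 < infDist z D := (hDclosed.notMem_iff_infDist_pos hDne).mp hzD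
    set r := infDist z D with hrdef
    obtain ⟨N, hN⟩ := exists_pow_lt_of_lt_one (by linarith : (0 : ℝ) < r / 2)
      (by norm_num : (1 / 2 : ℝ) < 1)
    have hz2 : z ∈ closure (Etot ∩ Metric.ball z (r / 2)) := by
      rw [Metric.mem_closure_iff] at hz ⊢
      intro ε hε
      obtain ⟨e, he, hde⟩ := hz (min ε (r / 2)) (lt_min hε (by linarith))
      exact ⟨e, ⟨he, by
        rw [Metric.mem_ball, dist_comm]
        exact hde.trans_le (min_le_right _ _)⟩, hde.trans_le (min_le_left _ _)⟩
    have hsub : Etot ∩ Metric.ball z (r / 2) ⊆ ⋃ n ∈ Finset.range N, E n := by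
      rintro e ⟨he, hball⟩
      refine hfinpart N r hN e he ?_
      have h3 : infDist z D ≤ infDist e D + dist z e := Metric.infDist_le_infDist_add_dist
      have h4 : dist z e < r / 2 := by
        rw [Metric.mem_ball] at hball
        rw [dist_comm]
        exact hball
      linarith
    have hclosedU : IsClosed (⋃ n ∈ Finset.range N, E n) :=
      isClosed_biUnion_finset fun i _ => hEn_closed i
    have h5 := closure_minimal hsub hclosedU hz2
    exact (Set.iUnion₂_subset fun n _ => subset_iUnion E n) h5
  -- D ⊆ closure Etot
  have hDsub : D ⊆ closure Etot := by
    intro x hx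
    rw [Metric.mem_closure_iff]
    intro ε hε
    set ε' := min (ε / 8) (1 / 2) with hε'def
    have hε'pos : 0 < ε' := lt_min (by linarith) (by norm_num)
    have hε'le : ε' ≤ ε / 8 := min_le_left _ _
    have hε'half : ε' ≤ 1 / 2 := min_le_right _ _
    have hnsub : ¬(Metric.ball x ε' ⊆ D) := by
      intro h
      have h1 : Metric.ball x ε' ⊆ interior D := interior_maximal h Metric.isOpen_ball
      rw [hDint, subset_empty_iff] at h1
      exact (Metric.nonempty_ball.mpr hε'pos).ne_empty h1
    obtain ⟨y, hyb, hyD⟩ := not_subset.mp hnsub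
    have hrpos : 0 < infDist y D := (hDclosed.notMem_iff_infDist_pos hDne).mp hyD
    set r := infDist y D with hrdef
    have hrle : r ≤ dist y x := Metric.infDist_le_dist_of_mem hx
    have hrlt : r < ε' := hrle.trans_lt (Metric.mem_ball.mp hyb)
    obtain ⟨q, hqQ, hqy⟩ := hQ.exists_dist_lt y (by linarith : (0 : ℝ) < r / 2)
    set d := infDist q D with hddef
    have hq1 : r / 2 ≤ d := by
      have h6 : infDist y D ≤ infDist q D + dist y q := Metric.infDist_le_infDist_add_dist
      linarith
    have hq2 : d ≤ 3 * r / 2 := by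
      have h7 : infDist q D ≤ infDist y D + dist q y := Metric.infDist_le_infDist_add_dist
      rw [dist_comm] at h7
      linarith
    have hdpos : 0 < d := by linarith
    have hdlt1 : d < 1 := by
      have : ε' ≤ 1 / 2 := hε'half
      linarith
    have hex : ∃ n : ℕ, (1 / 2 : ℝ) ^ n < d :=
      exists_pow_lt_of_lt_one hdpos (by norm_num)
    have hn₀pos : Nat.find hex ≠ 0 := by
      intro h
      have h8 := Nat.find_spec hex
      rw [h, pow_zero] at h8
      linarith
    obtain ⟨n, hn⟩ := Nat.exists_eq_succ_of_ne_zero hn₀pos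
    have hdn : d ≤ (1 / 2) ^ n := by
      have := Nat.find_min hex (by omega : n < Nat.find hex)
      linarith [not_lt.mp this]
    have hsmall : (1 / 2 : ℝ) ^ n < 2 * d := by
      have h9 := Nat.find_spec hex
      rw [hn, pow_succ] at h9
      linarith
    have hqA : q ∈ A n := ⟨hqQ, hdpos, hdn⟩
    obtain ⟨e, heE, hqe⟩ := hEcov n q hqA
    refine ⟨e, mem_iUnion.mpr ⟨n, heE⟩, ?_⟩
    have h10 : dist x e ≤ dist x y + dist y q + dist q e := dist_triangle4 x y q e
    have h11 : dist x y < ε' := by rw [dist_comm]; exact Metric.mem_ball.mp hyb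
    have h12 : dist q e < (1 / 2) ^ n := hqe
    -- total: < ε' + r/2 + 2d ≤ ε' + r/2 + 3r < ε' + 3.5 ε' ≤ 4.5 (ε/8) < ε
    calc dist x e ≤ dist x y + dist y q + dist q e := h10
      _ < ε' + r / 2 + 2 * d := by linarith
      _ ≤ ε' + r / 2 + 3 * r := by linarith
      _ < ε' + (7 / 2) * ε' := by linarith
      _ ≤ (9 / 2) * (ε / 8) := by linarith
      _ < ε := by linarith
  -- closure Etot is nowhere dense
  have hnwd : IsNowhereDense (closure Etot) := by
    rw [isClosed_closure.isNowhereDense_iff, eq_empty_iff_forall_notMem]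
    intro x hx
    set V := interior (closure Etot) \ D with hVdef
    have hVopen : IsOpen V := isOpen_interior.sdiff hDclosed
    have hVne : V.Nonempty := by
      by_contra h
      rw [not_nonempty_iff_eq_empty, diff_eq_empty] at h
      have h1 : x ∈ interior D := interior_maximal h isOpen_interior hx
      rw [hDint] at h1
      exact h1
    obtain ⟨q, hqI, hqD⟩ := hVne
    have hrq : 0 < infDist q D := (hDclosed.notMem_iff_infDist_pos hDne).mp hqD
    set r := infDist q D with hrdef
    obtain ⟨ρ₀, hρ₀, hball⟩ := Metric.isOpen_iff.mp hVopen q ⟨hqI, hqD⟩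
    set ρ := min ρ₀ (r / 2) with hρdef
    have hρpos : 0 < ρ := lt_min hρ₀ (by linarith)
    obtain ⟨N, hN⟩ := exists_pow_lt_of_lt_one (by linarith : (0 : ℝ) < r / 2)
      (by norm_num : (1 / 2 : ℝ) < 1)
    have hsub2 : Metric.ball q ρ ⊆ ⋃ n ∈ Finset.range N, E n := by
      intro z hz
      have hzV : z ∈ V := hball (Metric.ball_subset_ball (min_le_left _ _) hz)
      have hzE : z ∈ Etot := by
        have h2' : z ∈ D ∪ Etot := hclosure (interior_subset hzV.1)
        exact h2'.resolve_left hzV.2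
      refine hfinpart N r hN z hzE ?_
      have h3 : infDist q D ≤ infDist z D + dist q z := Metric.infDist_le_infDist_add_dist
      have h4 : dist q z < r / 2 := by
        rw [Metric.mem_ball, dist_comm] at hz
        exact lt_of_lt_of_le hz (min_le_right _ _)
      linarith
    have hUnwd : IsNowhereDense (⋃ n ∈ Finset.range N, E n) :=
      aux_nwd_biUnion hEn_closed hEn_nwd N
    have h5 : Metric.ball q ρ ⊆ interior (closure (⋃ n ∈ Finset.range N, E n)) :=
      interior_maximal (hsub2.trans subset_closure) Metric.isOpen_ball
    rw [hUnwd, subset_empty_iff] at h5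
    exact (Metric.nonempty_ball.mpr hρpos).ne_empty h5
  refine ⟨Etot, hEQ, hnwd, fun z hz => hDsub (subset_closure hz)⟩

end Aux

/-- If `X` is a dense in itself metric space and `Q` is a dense subset of `X`, then
`cof(nwd_Q) = cof(nwd_X)`, where `Q` carries the subspace topology. -/
theorem cofNwd_dense_subspace {X : Type u} [MetricSpace X]
    (hdii : ∀ x : X, ¬ IsOpen ({x} : Set X))
    (Q : Set X) (hQ : Dense Q) :
    cofNwd Q = cofNwd X := by
  have hQne : ∀ (Z : Type u) [TopologicalSpace Z],
      {c : Cardinal.{u} | ∃ W : Set (Set Z), Cardinal.mk W = c ∧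
        (∀ s ∈ W, IsNowhereDense s) ∧
        ∀ F : Set Z, IsNowhereDense F → ∃ s ∈ W, F ⊆ s}.Nonempty := by
    intro Z _
    exact ⟨Cardinal.mk {s : Set Z | IsNowhereDense s}, {s | IsNowhereDense s}, rfl,
      fun s hs => hs, fun F hF => ⟨F, hF, subset_rfl⟩⟩
  apply le_antisymm
  · -- cofNwd Q ≤ cofNwd X
    refine le_csInf (hQne X) ?_
    rintro c ⟨W, hWc, hWnwd, hWcof⟩
    set W' : Set (Set Q) := (fun s => Subtype.val ⁻¹' s) '' W with hW'
    have hmem : Cardinal.mk W' ∈ {c : Cardinal.{u} | ∃ W : Set (Set Q), Cardinal.mk W = c ∧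
        (∀ s ∈ W, IsNowhereDense s) ∧
        ∀ F : Set Q, IsNowhereDense F → ∃ s ∈ W, F ⊆ s} := by
      refine ⟨W', rfl, ?_, ?_⟩
      · rintro s ⟨t, htW, rfl⟩
        exact aux_nwd_preimage hQ (hWnwd t htW)
      · intro F hF
        obtain ⟨s, hsW, hFs⟩ := hWcof (Subtype.val '' F) (aux_nwd_image hQ hF)
        refine ⟨Subtype.val ⁻¹' s, mem_image_of_mem _ hsW, ?_⟩
        intro y hy
        exact hFs (mem_image_of_mem _ hy)
    calc cofNwd Q ≤ Cardinal.mk W' := csInf_le' hmem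
      _ ≤ Cardinal.mk W := Cardinal.mk_image_le
      _ = c := hWc
  · -- cofNwd X ≤ cofNwd Q
    refine le_csInf (hQne Q) ?_
    rintro c ⟨W', hW'c, hW'nwd, hW'cof⟩
    set W : Set (Set X) := (fun s => closure (Subtype.val '' s)) '' W' with hW
    have hmem : Cardinal.mk W ∈ {c : Cardinal.{u} | ∃ W : Set (Set X), Cardinal.mk W = c ∧
        (∀ s ∈ W, IsNowhereDense s) ∧
        ∀ F : Set X, IsNowhereDense F → ∃ s ∈ W, F ⊆ s} := by
      refine ⟨W, rfl, ?_, ?_⟩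
      · rintro s ⟨t, htW, rfl⟩
        exact (aux_nwd_image hQ (hW'nwd t htW)).closure
      · intro F hF
        obtain ⟨E, hEQ, hEnwd, hFE⟩ := aux_exists_nwd_closure hdii hQ hF
        have hEnwd' : IsNowhereDense E := aux_nwd_mono hEnwd subset_closure
        obtain ⟨s, hsW', hEs⟩ := hW'cof (Subtype.val ⁻¹' E) (aux_nwd_preimage hQ hEnwd')
        refine ⟨closure (Subtype.val '' s), mem_image_of_mem _ hsW', ?_⟩
        refine hFE.trans (closure_mono ?_)
        intro e he
        have : e ∈ Subtype.val '' (Subtype.val ⁻¹' E : Set Q) := by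
          rw [Subtype.image_preimage_coe]
          exact ⟨hEQ he, he⟩
        obtain ⟨y, hy, rfl⟩ := this
        exact mem_image_of_mem _ (hEs hy)
    calc cofNwd X ≤ Cardinal.mk W := csInf_le' hmem
      _ ≤ Cardinal.mk W' := Cardinal.mk_image_le
      _ = c := hW'c
end

section
/- Let λ be an infinite cardinal and let λ^ω denote the countable product of the discrete space of cardinality λ with the product topology. Then every subset of λ^ω of cardinality less than λ is nowhere dense, and non(nwd_{λ^ω}) = λ, i.e., λ is the least cardinality of a subset of λ^ω that is not nowhere dense. Moreover cof(nwd_{λ^ω}) > λ. -/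
open Topology Set

universe u

/-- The uniformity number of the ideal of nowhere dense subsets of `Z`: the least
cardinality of a subset of `Z` that is not nowhere dense. -/
noncomputable def nonNwd (Z : Type u) [TopologicalSpace Z] : Cardinal.{u} :=
  sInf {c : Cardinal.{u} | ∃ s : Set Z, Cardinal.mk s = c ∧ ¬ IsNowhereDense s}

section Aux

variable {L : Type u} [TopologicalSpace L] [DiscreteTopology L]

/-- A set is nowhere dense if every nonempty open set contains a nonempty open set
disjoint from it. -/
lemma nwd_of_shrink (s : Set (ℕ → L))
    (h : ∀ U : Set (ℕ → L), IsOpen U → U.Nonempty →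
      ∃ V : Set (ℕ → L), IsOpen V ∧ V.Nonempty ∧ V ⊆ U ∧ V ∩ s = ∅) :
    IsNowhereDense s := by
  rw [IsNowhereDense, Set.eq_empty_iff_forall_notMem]
  intro x hx
  obtain ⟨V, hVo, hVne, hVU, hVs⟩ := h _ isOpen_interior ⟨x, hx⟩
  have h2 : V ∩ closure s ⊆ closure (V ∩ s) := hVo.inter_closure
  rw [hVs, closure_empty] at h2
  obtain ⟨y, hy⟩ := hVne
  exact h2 ⟨hy, interior_subset (hVU hy)⟩

lemma exists_cylinder {U : Set (ℕ → L)} (hU : IsOpen U) {x : ℕ → L} (hx : x ∈ U) :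
    ∃ I : Finset ℕ, ∃ u : ℕ → Set L, (∀ i ∈ I, x i ∈ u i) ∧ (I : Set ℕ).pi u ⊆ U := by
  obtain ⟨I, u, h1, h2⟩ := isOpen_pi_iff.1 hU x hx
  exact ⟨I, u, fun i hi => (h1 i hi).2, h2⟩

lemma small_nwd (s : Set (ℕ → L)) (hs : Cardinal.mk s < Cardinal.mk L) :
    IsNowhereDense s := by
  apply nwd_of_shrink
  intro U hUo ⟨x, hx⟩
  obtain ⟨I, u, hxu, hIU⟩ := exists_cylinder hUo hx
  set n : ℕ := I.sup id + 1 with hn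
  have hnI : n ∉ I := by
    intro h
    have := Finset.le_sup (f := id) h
    simp only [id_eq] at this
    omega
  -- choose a value not attained at coordinate n
  have : ∃ a : L, a ∉ (fun f : ℕ → L => f n) '' s := by
    by_contra h
    push_neg at h
    have huniv : (fun f : ℕ → L => f n) '' s = Set.univ :=
      Set.eq_univ_of_forall h
    have h1 : Cardinal.mk ((fun f : ℕ → L => f n) '' s) ≤ Cardinal.mk s :=
      Cardinal.mk_image_le
    rw [huniv, Cardinal.mk_univ] at h1
    exact absurd (h1.trans_lt hs) (lt_irrefl _)
  obtain ⟨a, ha⟩ := this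
  refine ⟨(I : Set ℕ).pi u ∩ (fun f : ℕ → L => f n) ⁻¹' {a}, ?_, ?_, ?_, ?_⟩
  · exact (isOpen_set_pi I.finite_toSet fun i _ => isOpen_discrete _).inter
      ((isOpen_discrete _).preimage (continuous_apply n))
  · refine ⟨Function.update x n a, ?_, ?_⟩
    · intro i hi
      rw [Function.update_of_ne (by rintro rfl; exact hnI hi)]
      exact hxu i hi
    · simp [Function.update_self]
  · exact fun y hy => hIU hy.1
  · rw [Set.eq_empty_iff_forall_notMem]
    rintro y ⟨⟨-, hy2⟩, hys⟩
    exact ha ⟨y, hys, hy2⟩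

end Aux

variable {L : Type u} [TopologicalSpace L] [DiscreteTopology L] [Infinite L]

/-- The set of eventually-constant sequences. -/
def Dset (L : Type u) [Infinite L] : Set (ℕ → L) :=
  {f | ∃ n : ℕ, ∀ m : ℕ, n ≤ m → f m = Classical.arbitrary L}

lemma Dset_dense : Dense (Dset L) := by
  rw [dense_iff_inter_open]
  intro U hUo ⟨x, hx⟩
  obtain ⟨I, u, hxu, hIU⟩ := exists_cylinder hUo hx
  set l₀ : L := Classical.arbitrary L
  refine ⟨fun i => if i ∈ I then x i else l₀, hIU ?_, ⟨I.sup id + 1, fun m hm => ?_⟩⟩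
  · intro i hi
    simp only [Finset.mem_coe] at hi
    simp [hi, hxu i hi]
  · have : m ∉ I := by
      intro h
      have := Finset.le_sup (f := id) h
      simp only [id_eq] at this
      omega
    simp [this, l₀]

lemma Dset_not_nwd : ¬ IsNowhereDense (Dset L) := by
  rw [IsNowhereDense, Dset_dense.closure_eq, interior_univ]
  exact Set.univ_nonempty.ne_empty

lemma mk_Dset : Cardinal.mk (Dset L) = Cardinal.mk L := by
  set l₀ : L := Classical.arbitrary L
  apply le_antisymm
  · -- surjection from lists
    have hsub : Dset L ⊆ Set.range (fun l : List L => fun i : ℕ => l.getD i l₀) := by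
      rintro f ⟨n, hf⟩
      refine ⟨List.ofFn (fun i : Fin n => f i), funext fun i => ?_⟩
      show (List.ofFn (fun i : Fin n => f i)).getD i l₀ = f i
      by_cases h : i < n
      · rw [List.getD_eq_getElem _ _ (by simpa using h)]
        simp
      · push_neg at h
        rw [List.getD_eq_default _ _ (by simpa using h)]
        exact (hf i h).symm
    calc Cardinal.mk (Dset L) ≤ Cardinal.mk (Set.range
          (fun l : List L => fun i : ℕ => l.getD i l₀)) := Cardinal.mk_le_mk_of_subset hsub
      _ ≤ Cardinal.mk (List L) := Cardinal.mk_range_le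
      _ = Cardinal.mk L := Cardinal.mk_list_eq_mk L
  · -- injection from L
    have : Function.Injective (fun a : L =>
        (⟨fun i => if i = 0 then a else l₀, ⟨1, fun m hm => if_neg (by omega)⟩⟩ : Dset L)) := by
      intro a b hab
      have := congrArg (fun f : Dset L => (f : ℕ → L) 0) hab
      simpa using this
    exact Cardinal.mk_le_of_injective this

/-- Let `λ = #L` be an infinite cardinal (realized by an infinite discrete space `L`)
and let `λ^ω = (ℕ → L)` carry the product topology. Then every subset of `λ^ω` of
cardinality less than `λ` is nowhere dense, `non(nwd_{λ^ω}) = λ`, and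
`cof(nwd_{λ^ω}) > λ`. -/
theorem nwd_invariants_discrete_power {L : Type u}
    [TopologicalSpace L] [DiscreteTopology L] [Infinite L] :
    (∀ s : Set (ℕ → L), Cardinal.mk s < Cardinal.mk L → IsNowhereDense s) ∧
    nonNwd (ℕ → L) = Cardinal.mk L ∧
    Cardinal.mk L < cofNwd (ℕ → L) := by
  refine ⟨fun s hs => small_nwd s hs, ?_, ?_⟩
  · -- nonNwd = mk L
    have hmemD : Cardinal.mk L ∈ {c : Cardinal.{u} | ∃ s : Set (ℕ → L),
        Cardinal.mk s = c ∧ ¬ IsNowhereDense s} := ⟨Dset L, mk_Dset, Dset_not_nwd⟩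
    apply le_antisymm
    · exact csInf_le' hmemD
    · apply le_csInf ⟨_, hmemD⟩
      rintro c ⟨s, rfl, hsn⟩
      by_contra h
      push_neg at h
      exact hsn (small_nwd s h)
  · -- cofNwd
    have hSne : {c : Cardinal.{u} | ∃ W : Set (Set (ℕ → L)),
        Cardinal.mk W = c ∧ (∀ s ∈ W, IsNowhereDense s) ∧
        ∀ F : Set (ℕ → L), IsNowhereDense F → ∃ s ∈ W, F ⊆ s}.Nonempty :=
      ⟨Cardinal.mk {t : Set (ℕ → L) | IsNowhereDense t},
        ⟨{t | IsNowhereDense t}, rfl, fun s hs => hs, fun F hF => ⟨F, hF, subset_rfl⟩⟩⟩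
    have hmem : cofNwd (ℕ → L) ∈ {c : Cardinal.{u} | ∃ W : Set (Set (ℕ → L)),
        Cardinal.mk W = c ∧ (∀ s ∈ W, IsNowhereDense s) ∧
        ∀ F : Set (ℕ → L), IsNowhereDense F → ∃ s ∈ W, F ⊆ s} := csInf_mem hSne
    obtain ⟨W, hWmk, hWnwd, hWcof⟩ := hmem
    rw [← hWmk, lt_iff_not_ge]
    intro hle
    -- W is nonempty
    have hWne : Nonempty W := by
      obtain ⟨s, hsW, -⟩ := hWcof ∅ isNowhereDense_empty
      exact ⟨⟨s, hsW⟩⟩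
    obtain ⟨e⟩ := (Cardinal.le_def _ _).1 hle
    have hsurj : Function.Surjective (Function.invFun (⇑e)) :=
      Function.invFun_surjective e.injective
    set w : L → Set (ℕ → L) := fun a => ((Function.invFun (⇑e) a : W) : Set (ℕ → L)) with hw
    -- pick, for each a, a point with first coordinate a outside closure (w a)
    have hpick : ∀ a : L, ∃ p : ℕ → L, p 0 = a ∧ p ∉ closure (w a) := by
      intro a
      have hCa : IsOpen {f : ℕ → L | f 0 = a} := by
        have heq : {f : ℕ → L | f 0 = a} = (fun f : ℕ → L => f 0) ⁻¹' {a} := rfl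
        rw [heq]
        exact (isOpen_discrete _).preimage (continuous_apply 0)
      have hnwd : IsNowhereDense (w a) := hWnwd _ (Function.invFun (⇑e) a).2
      have : ¬ {f : ℕ → L | f 0 = a} ⊆ closure (w a) := by
        intro hsub
        have h1 : {f : ℕ → L | f 0 = a} ⊆ interior (closure (w a)) :=
          interior_maximal hsub hCa
        rw [hnwd] at h1
        exact h1 (show (fun _ => a) ∈ _ from rfl)
      obtain ⟨p, hp1, hp2⟩ := Set.not_subset.1 this
      exact ⟨p, hp1, hp2⟩
    choose p hp0 hpcl using hpick
    have hFnwd : IsNowhereDense (Set.range p) := by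
      apply nwd_of_shrink
      intro U hUo ⟨x, hx⟩
      obtain ⟨I, u, hxu, hIU⟩ := exists_cylinder hUo hx
      set a : L := x 0 with ha
      set n : ℕ := max (I.sup id + 1) 1 with hn
      have hnI : n ∉ I := by
        intro h
        have := Finset.le_sup (f := id) h
        simp only [id_eq] at this
        omega
      have hn0 : n ≠ 0 := by omega
      obtain ⟨c, hc⟩ := exists_ne (p a n)
      refine ⟨(I : Set ℕ).pi u ∩ (fun f : ℕ → L => f 0) ⁻¹' {a}
          ∩ (fun f : ℕ → L => f n) ⁻¹' {c}, ?_, ?_, ?_, ?_⟩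
      · exact (((isOpen_set_pi I.finite_toSet fun i _ => isOpen_discrete _).inter
          ((isOpen_discrete _).preimage (continuous_apply 0))).inter
          ((isOpen_discrete _).preimage (continuous_apply n)))
      · refine ⟨Function.update x n c, ⟨?_, ?_⟩, ?_⟩
        · intro i hi
          rw [Function.update_of_ne (by rintro rfl; exact hnI hi)]
          exact hxu i hi
        · show Function.update x n c 0 = a
          rw [Function.update_of_ne (Ne.symm hn0), ha]
        · simp [Function.update_self]
      · exact fun y hy => hIU hy.1.1
      · rw [Set.eq_empty_iff_forall_notMem]
        rintro y ⟨⟨⟨-, hy0⟩, hyn⟩, b, rfl⟩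
        simp only [Set.mem_preimage, Set.mem_singleton_iff] at hy0 hyn
        have hb : b = a := by rw [← hp0 b, hy0]
        rw [hb] at hyn
        exact hc hyn.symm
    obtain ⟨s, hsW, hFs⟩ := hWcof _ hFnwd
    obtain ⟨a, ha⟩ := hsurj ⟨s, hsW⟩
    apply hpcl a
    apply subset_closure
    have : w a = s := by rw [hw]; simp [ha]
    rw [this]
    exact hFs ⟨a, rfl⟩
end
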